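/- arXiv:2012.02522 — 8 statements merged into one kernel-verified Lean document; each statement's English description precedes it below -/
import Mathlib

section
/- Let H be a real Hilbert space, f : H → ℝ convex and differentiable, Ψ : H → ℝ ∪ {+∞} convex, proper and lower semicontinuous, F = f + Ψ with optimal value F* attained on a nonempty solution set Ω. Let A be a self-adjoint positive-semidefinite bounded linear operator on H, and suppose F satisfies the sharpness condition with parameters ζ > 0, ξ > 0, θ ∈ [0,1]. Then for every point x with F(x) − F* ≤ ξ and every λ ∈ [0,1], the optimal value of the subproblem satisfies min_p Q_A(p; x) ≤ −λ (F(x) − F*) + (λ² ‖A‖ / (2ζ²)) (F(x) − F*)^{2θ}. -/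
open Metric Filter Topology

lemma grad_convex_ineq {H : Type*} [NormedAddCommGroup H] [InnerProductSpace ℝ H]
    [CompleteSpace H] {f : H → ℝ} (hf : ConvexOn ℝ Set.univ f) {g x : H}
    (hg : HasGradientAt f g x) (y : H) : (inner ℝ g (y - x) : ℝ) ≤ f y - f x := by
  set v := y - x with hv
  have hcurve : HasDerivAt (fun t : ℝ => x + t • v) v 0 := by
    simpa using ((hasDerivAt_id (0 : ℝ)).smul_const v).const_add x
  have hφ : HasDerivAt (fun t : ℝ => f (x + t • v)) (inner ℝ g v : ℝ) 0 := by
    have h2 := hg.hasFDerivAt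
    have h2' : HasFDerivAt f ((InnerProductSpace.toDual ℝ H) g) ((fun t : ℝ => x + t • v) 0) := by
      simpa using h2
    have h3 := h2'.comp_hasDerivAt 0 hcurve
    simp at h3
    exact h3
  have hslope : Tendsto (slope (fun t : ℝ => f (x + t • v)) 0) (𝓝[>] (0 : ℝ))
      (𝓝 (inner ℝ g v : ℝ)) :=
    (hasDerivAt_iff_tendsto_slope.mp hφ).mono_left
      (nhdsWithin_mono _ (fun t ht => ne_of_gt ht))
  have hbound : ∀ᶠ t in 𝓝[>] (0 : ℝ),
      slope (fun t : ℝ => f (x + t • v)) 0 t ≤ f y - f x := by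
    filter_upwards [Ioc_mem_nhdsGT one_pos] with t ht
    have htt : (0:ℝ) < t := ht.1
    have hcvx := hf.2 (Set.mem_univ x) (Set.mem_univ y)
      (show (0:ℝ) ≤ 1 - t by linarith [ht.2]) htt.le (by ring)
    have hco : (1 - t) • x + t • y = x + t • v := by rw [hv]; module
    rw [hco] at hcvx
    have h0 : x + (0:ℝ) • v = x := by simp
    rw [slope_def_field]
    rw [h0, sub_zero, div_le_iff₀ htt]
    simp only [smul_eq_mul] at hcvx
    nlinarith
  have := le_of_tendsto hslope hbound
  linarith

lemma ereal_fin_of_add {a : ℝ} {b : EReal} {c : ℝ} (h : (a : EReal) + b = (c : EReal))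
    (hb : b ≠ ⊥) : b = ((c - a : ℝ) : EReal) := by
  have ht : b ≠ ⊤ := by
    intro hh; rw [hh] at h; simp at h
  lift b to ℝ using ⟨ht, hb⟩
  norm_cast at h ⊢
  linarith

lemma ereal_le_of_forall_add {a : EReal} {c : ℝ}
    (h : ∀ ε : ℝ, 0 < ε → a ≤ ((c + ε : ℝ) : EReal)) : a ≤ (c : EReal) := by
  by_contra hlt
  push_neg at hlt
  induction a using EReal.rec with
  | bot => exact absurd hlt (by simp)
  | coe r =>
      have hcr : c < r := by exact_mod_cast hlt
      have := h ((r - c) / 2) (by linarith)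
      rw [EReal.coe_le_coe_iff] at this
      linarith
  | top =>
      have := h 1 one_pos
      exact absurd (top_le_iff.mp this) (EReal.coe_ne_top _)


/-- The regularized objective `F = f + Ψ` (with `Ψ` extended-real-valued). -/
noncomputable def objF {H : Type*} [NormedAddCommGroup H] [InnerProductSpace ℝ H]
    (f : H → ℝ) (Ψ : H → EReal) (x : H) : EReal := (f x : EReal) + Ψ x

/-- The subproblem model `Q_A(p; x) = ⟨∇f(x), p⟩ + (1/2)⟨p, A p⟩ + Ψ(x + p) − Ψ(x)`. -/
noncomputable def modelQ {H : Type*} [NormedAddCommGroup H] [InnerProductSpace ℝ H]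
    (f' : H → H) (Ψ : H → EReal) (A : H →L[ℝ] H) (x p : H) : EReal :=
  (((inner ℝ (f' x) p : ℝ) + (1 / 2) * (inner ℝ p (A p) : ℝ) : ℝ) : EReal) + Ψ (x + p) - Ψ x

/-- Convexity for an extended-real-valued function. -/
def ConvexEReal {H : Type*} [NormedAddCommGroup H] [InnerProductSpace ℝ H]
    (Ψ : H → EReal) : Prop :=
  ∀ x y : H, ∀ a b : ℝ, 0 ≤ a → 0 ≤ b → a + b = 1 →
    Ψ (a • x + b • y) ≤ (a : EReal) * Ψ x + (b : EReal) * Ψ y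

/-- Properness: `Ψ` never takes the value `−∞` and is finite somewhere
(i.e. `Ψ : H → ℝ ∪ {+∞}` is proper). -/
def ProperEReal {H : Type*} (Ψ : H → EReal) : Prop :=
  (∀ x, Ψ x ≠ ⊥) ∧ (∃ x, Ψ x ≠ ⊤)

set_option maxHeartbeats 1000000 in
/-- under the sharpness condition with parameters `ζ, ξ, θ`, for any `x` in the
level set and any `λ ∈ [0,1]`, the optimal value of the subproblem satisfies
`min_p Q_A(p; x) ≤ −λ (F(x) − F*) + (λ² ‖A‖ / (2ζ²)) (F(x) − F*)^{2θ}`. -/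
theorem statement0
    {H : Type*} [NormedAddCommGroup H] [InnerProductSpace ℝ H] [CompleteSpace H]
    (f : H → ℝ) (f' : H → H) (Ψ : H → EReal) (Ω : Set H) (Fstar : ℝ)
    (A : H →L[ℝ] H) (ζ ξ θ : ℝ)
    -- f convex and differentiable with gradient f'
    (hf_conv : ConvexOn ℝ Set.univ f)
    (hf_diff : ∀ x : H, HasGradientAt f (f' x) x)
    -- Ψ convex, proper, lower semicontinuous
    (hΨ_conv : ConvexEReal Ψ)
    (hΨ_proper : ProperEReal Ψ)
    (hΨ_lsc : LowerSemicontinuous Ψ)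
    -- F* attained on the nonempty solution set Ω
    (hΩ_ne : Ω.Nonempty)
    (hΩ : ∀ y : H, y ∈ Ω ↔ objF f Ψ y = (Fstar : EReal))
    (hFstar_lb : ∀ y : H, (Fstar : EReal) ≤ objF f Ψ y)
    -- A self-adjoint positive semidefinite
    (hA_sa : ∀ u v : H, (inner ℝ (A u) v : ℝ) = (inner ℝ u (A v) : ℝ))
    (hA_psd : ∀ u : H, (0 : ℝ) ≤ (inner ℝ u (A u) : ℝ))
    -- sharpness condition with parameters ζ > 0, ξ > 0, θ ∈ [0,1]
    (hζ : 0 < ζ) (hξ : 0 < ξ) (hθ0 : 0 ≤ θ) (hθ1 : θ ≤ 1)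
    (hsharp : ∀ y : H, ∀ d : ℝ, objF f Ψ y = ((Fstar + d : ℝ) : EReal) → d ≤ ξ →
      ζ * infDist y Ω ≤ d ^ θ) :
    ∀ x : H, ∀ δ : ℝ, objF f Ψ x = ((Fstar + δ : ℝ) : EReal) → δ ≤ ξ →
      ∀ lam : ℝ, 0 ≤ lam → lam ≤ 1 →
        (⨅ p : H, modelQ f' Ψ A x p) ≤
          ((-lam * δ + lam ^ 2 * ‖A‖ / (2 * ζ ^ 2) * δ ^ (2 * θ) : ℝ) : EReal) := by

  intro x δ hx hδξ lam hlam0 hlam1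
  have hδ0 : 0 ≤ δ := by
    have h := hFstar_lb x
    rw [hx, EReal.coe_le_coe_iff] at h
    linarith
  have hsh := hsharp x δ hx hδξ
  set D : ℝ := δ ^ θ / ζ with hDdef
  have hδθ0 : 0 ≤ δ ^ θ := Real.rpow_nonneg hδ0 θ
  have hdist : infDist x Ω ≤ D := by
    rw [hDdef, le_div_iff₀ hζ]
    linarith [hsh]
  have hD0 : 0 ≤ D := le_trans (infDist_nonneg) hdist
  have hD2 : δ ^ (2 * θ) = ζ ^ 2 * D ^ 2 := by
    have h1 : δ ^ (2 * θ) = (δ ^ θ) ^ (2 : ℕ) := by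
      rw [show (2 : ℝ) * θ = θ * 2 by ring, Real.rpow_mul hδ0]
      norm_num
    rw [h1, hDdef]
    field_simp
  -- extract finite value of Ψ x
  have hψx : Ψ x = ((Fstar + δ - f x : ℝ) : EReal) := by
    have hx' : (f x : EReal) + Ψ x = ((Fstar + δ : ℝ) : EReal) := hx
    exact ereal_fin_of_add hx' (hΨ_proper.1 x)
  set L : ℝ := ‖A‖ with hLdef
  have hL0 : 0 ≤ L := norm_nonneg A
  apply ereal_le_of_forall_add
  intro ε hε
  have hden : 0 < L * (2 * D + 1) + 1 := by nlinarith
  set η : ℝ := min 1 (ε / (L * (2 * D + 1) + 1)) with hηdef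
  have hη0 : 0 < η := lt_min one_pos (div_pos hε hden)
  have hη1 : η ≤ 1 := min_le_left _ _
  have hηε : η * (L * (2 * D + 1) + 1) ≤ ε := by
    have := min_le_right 1 (ε / (L * (2 * D + 1) + 1))
    calc η * (L * (2 * D + 1) + 1) ≤ ε / (L * (2 * D + 1) + 1) * (L * (2 * D + 1) + 1) := by
          exact mul_le_mul_of_nonneg_right this hden.le
      _ = ε := by field_simp
  obtain ⟨xb, hxbΩ, hxbd⟩ := (infDist_lt_iff hΩ_ne).mp
    (lt_add_of_pos_right (infDist x Ω) hη0)
  have hxbF : objF f Ψ xb = (Fstar : EReal) := (hΩ xb).mp hxbΩ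
  have hψb : Ψ xb = ((Fstar - f xb : ℝ) : EReal) := by
    have hx' : (f xb : EReal) + Ψ xb = ((Fstar : ℝ) : EReal) := hxbF
    exact ereal_fin_of_add hx' (hΨ_proper.1 xb)
  set v : H := xb - x with hvdef
  set p : H := lam • v with hpdef
  have hnv : ‖v‖ ≤ D + η := by
    have h1 : ‖v‖ = dist x xb := by
      rw [hvdef, dist_eq_norm, norm_sub_rev]
    rw [h1]
    linarith [hxbd, hdist]
  -- convexity of Ψ
  have hco : (1 - lam) • x + lam • xb = x + p := by
    rw [hpdef, hvdef]; module
  have hconv : Ψ (x + p) ≤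
      (((1 - lam) * (Fstar + δ - f x) + lam * (Fstar - f xb) : ℝ) : EReal) := by
    have h1 := hΨ_conv x xb (1 - lam) lam (by linarith) hlam0 (by ring)
    rw [hco, hψx, hψb] at h1
    have h2 : ((1 - lam : ℝ) : EReal) * ((Fstar + δ - f x : ℝ) : EReal)
        + ((lam : ℝ) : EReal) * ((Fstar - f xb : ℝ) : EReal)
        = (((1 - lam) * (Fstar + δ - f x) + lam * (Fstar - f xb) : ℝ) : EReal) := by
      norm_cast
    rw [h2] at h1
    exact h1
  set r1 : ℝ := (inner ℝ (f' x) p : ℝ) + 1 / 2 * (inner ℝ p (A p) : ℝ) with hr1def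
  have hQle : modelQ f' Ψ A x p ≤
      ((r1 + ((1 - lam) * (Fstar + δ - f x) + lam * (Fstar - f xb)) - (Fstar + δ - f x) : ℝ)
        : EReal) := by
    unfold modelQ
    rw [hψx]
    calc ((r1 : ℝ) : EReal) + Ψ (x + p) - ((Fstar + δ - f x : ℝ) : EReal)
        ≤ ((r1 : ℝ) : EReal)
            + (((1 - lam) * (Fstar + δ - f x) + lam * (Fstar - f xb) : ℝ) : EReal)
            - ((Fstar + δ - f x : ℝ) : EReal) :=
          EReal.sub_le_sub (add_le_add_right hconv _) le_rfl
      _ = ((r1 + ((1 - lam) * (Fstar + δ - f x) + lam * (Fstar - f xb)) - (Fstar + δ - f x) : ℝ)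
            : EReal) := by norm_cast
  refine le_trans (iInf_le _ p) (le_trans hQle ?_)
  rw [EReal.coe_le_coe_iff]
  -- now a purely real estimate
  have hip : (inner ℝ (f' x) p : ℝ) = lam * (inner ℝ (f' x) v : ℝ) :=
    real_inner_smul_right _ _ _
  have hgrad : (inner ℝ (f' x) v : ℝ) ≤ f xb - f x :=
    grad_convex_ineq hf_conv (hf_diff x) xb
  have hpap : (inner ℝ p (A p) : ℝ) = lam ^ 2 * (inner ℝ v (A v) : ℝ) := by
    rw [hpdef, map_smul, real_inner_smul_left, real_inner_smul_right]
    ring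
  have hvAv : (inner ℝ v (A v) : ℝ) ≤ L * ‖v‖ ^ 2 := by
    calc (inner ℝ v (A v) : ℝ) ≤ ‖v‖ * ‖A v‖ := real_inner_le_norm _ _
      _ ≤ ‖v‖ * (L * ‖v‖) := by
          exact mul_le_mul_of_nonneg_left (A.le_opNorm v) (norm_nonneg _)
      _ = L * ‖v‖ ^ 2 := by ring
  have hnv2 : ‖v‖ ^ 2 ≤ (D + η) ^ 2 := pow_le_pow_left₀ (norm_nonneg v) hnv 2
  have hvAv2 : (inner ℝ v (A v) : ℝ) ≤ L * (D + η) ^ 2 :=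
    le_trans hvAv (mul_le_mul_of_nonneg_left hnv2 hL0)
  have hlam2 : lam ^ 2 ≤ 1 := by nlinarith
  have hgoal2 : lam ^ 2 * L / (2 * ζ ^ 2) * δ ^ (2 * θ) = 1 / 2 * (lam ^ 2 * (L * D ^ 2)) := by
    rw [hD2]
    field_simp
  rw [hr1def, hip, hpap, hgoal2]
  have h1 : lam * (inner ℝ (f' x) v : ℝ) ≤ lam * (f xb - f x) :=
    mul_le_mul_of_nonneg_left hgrad hlam0
  have h2 : 1 / 2 * (lam ^ 2 * (inner ℝ v (A v) : ℝ)) ≤ 1 / 2 * (lam ^ 2 * (L * (D + η) ^ 2)) := by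
    have h2' := mul_le_mul_of_nonneg_left hvAv2 (sq_nonneg lam)
    linarith
  have h3 : 1 / 2 * (lam ^ 2 * (L * (D + η) ^ 2)) ≤ 1 / 2 * (lam ^ 2 * (L * D ^ 2)) + ε := by
    have key0 : (0 : ℝ) ≤ 2 * D * η + η ^ 2 := by nlinarith
    have key : lam ^ 2 * (L * (2 * D * η + η ^ 2)) ≤ L * (2 * D * η + η ^ 2) := by
      nlinarith [mul_nonneg hL0 key0]
    have key2 : L * η ^ 2 ≤ L * η := by
      nlinarith [mul_nonneg hL0 (mul_nonneg hη0.le (by linarith : (0:ℝ) ≤ 1 - η))]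
    have e1 : lam ^ 2 * (L * (D + η) ^ 2)
        = lam ^ 2 * (L * D ^ 2) + lam ^ 2 * (L * (2 * D * η + η ^ 2)) := by ring
    have e2 : η * (L * (2 * D + 1) + 1)
        = L * (2 * D * η + η ^ 2) + (L * η - L * η ^ 2) + η := by ring
    linarith [key, key2, hηε, e1, e2, hη0.le, hε.le]
  linarith [h1, h2, h3]
end

section
/- (Linear convergence for θ ∈ (1/2, 1].) Let H be a real Hilbert space, f : H → ℝ convex and differentiable, Ψ : H → ℝ ∪ {+∞} convex, proper and lower semicontinuous, F = f + Ψ with optimal value F* attained on a nonempty solution set Ω. Suppose F satisfies the sharpness condition with parameters ζ > 0, ξ > 0 and θ ∈ (1/2, 1]. Let sequences x^t, H_t, p^t, α_t be given with x^0 satisfying F(x^0) − F* ≤ ξ, x^{t+1} = x^t + α_t p^t, M ⪰ H_t ⪰ m > 0 for all t, each p^t satisfying the multiplicative inexactness condition with parameter η ∈ [0,1) for Q_{H_t}(·; x^t), and each α_t ∈ (0,1] satisfying the Armijo condition with parameter γ ∈ (0,1). Write δ_t = F(x^t) − F*. Then: (i) whenever δ_t > (ζ²/M)^{1/(2θ−1)},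 one has δ_{t+1} ≤ δ_t (1 − (1 − η) α_t γ ζ² ξ^{1−2θ} / (2M)); (ii) if t₀ is the first index at which δ_{t₀} ≤ (ζ²/M)^{1/(2θ−1)}, then for every t ≥ t₀, δ_{t+1} ≤ δ_t (1 − (1 − η) α_t γ / 2). -/
open Metric Filter
open Topology

lemma ereal_real_add_eq {r s : ℝ} {v : EReal} (h : (r : EReal) + v = (s : EReal)) :
    v = ((s - r : ℝ) : EReal) := by
  induction v using EReal.rec with
  | bot => simp at h
  | coe t =>
    rw [← EReal.coe_add, EReal.coe_eq_coe_iff] at h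
    rw [EReal.coe_eq_coe_iff]; linarith
  | top => simp at h

lemma grad_ineq_aux {H : Type*} [NormedAddCommGroup H] [InnerProductSpace ℝ H] [CompleteSpace H]
    {f : H → ℝ} {f' : H → H} (hf_conv : ConvexOn ℝ Set.univ f)
    (hf_diff : ∀ y, HasGradientAt f (f' y) y) (x z : H) :
    (inner ℝ (f' x) (z - x) : ℝ) ≤ f z - f x := by
  have hF : HasFDerivAt f (InnerProductSpace.toDual ℝ H (f' x)) x :=
    hasGradientAt_iff_hasFDerivAt.1 (hf_diff x)
  have hl : HasDerivAt (fun t : ℝ => x + t • (z - x)) (z - x) 0 := by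
    simpa using ((hasDerivAt_id (0 : ℝ)).smul_const (z - x)).const_add x
  have hline : HasDerivAt (fun t : ℝ => f (x + t • (z - x))) (inner ℝ (f' x) (z - x) : ℝ) 0 := by
    have h0 : x + (0 : ℝ) • (z - x) = x := by simp
    have := (h0 ▸ hF).comp_hasDerivAt 0 hl
    simp only [InnerProductSpace.toDual_apply_apply, zero_smul, add_zero] at this
    exact this
  have hslope : Tendsto (slope (fun t : ℝ => f (x + t • (z - x))) 0) (𝓝[>] 0)
      (𝓝 (inner ℝ (f' x) (z - x) : ℝ)) :=
    (hasDerivAt_iff_tendsto_slope.1 hline).mono_left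
      (nhdsWithin_mono _ (fun t ht => ne_of_gt ht))
  refine le_of_tendsto hslope ?_
  filter_upwards [Ioc_mem_nhdsGT_of_mem (by norm_num : (0:ℝ) ∈ Set.Ico 0 1)] with t ht
  have ht0 : 0 < t := ht.1
  have hconv := hf_conv.2 (Set.mem_univ z) (Set.mem_univ x) (le_of_lt ht0)
    (by linarith [ht.2] : (0:ℝ) ≤ 1 - t) (by ring)
  have hxt : x + t • (z - x) = t • z + (1 - t) • x := by
    rw [smul_sub, sub_smul, one_smul]; abel
  rw [slope_def_field]
  rw [div_le_iff₀ (by simpa using ht0)]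
  have hφ0 : f (x + (0:ℝ) • (z - x)) = f x := by simp
  rw [hxt, hφ0]
  simp only [smul_eq_mul] at hconv
  nlinarith [hconv]

lemma affine_minorant_aux {H : Type*} [NormedAddCommGroup H] [InnerProductSpace ℝ H]
    {Ψ : H → EReal} (hconv : ConvexEReal Ψ) (hproper : ProperEReal Ψ)
    (hlsc : LowerSemicontinuous Ψ) :
    ∃ (L : H →L[ℝ] ℝ) (b : ℝ), ∀ y, ((L y + b : ℝ) : EReal) ≤ Ψ y := by
  obtain ⟨hbot, x₀, hx₀⟩ := hproper
  set S : Set (H × ℝ) := {z | Ψ z.1 ≤ (z.2 : EReal)} with hS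
  have hSclosed : IsClosed S := by
    have h1 : IsClosed {q : H × EReal | Ψ q.1 ≤ q.2} :=
      lowerSemicontinuous_iff_isClosed_epigraph.1 hlsc
    have : S = (fun z : H × ℝ => (z.1, (z.2 : EReal))) ⁻¹' {q : H × EReal | Ψ q.1 ≤ q.2} := rfl
    rw [this]
    exact h1.preimage (continuous_fst.prodMk (continuous_coe_real_ereal.comp continuous_snd))
  have hSconv : Convex ℝ S := by
    rintro z hz w hw a b ha hb hab
    simp only [hS, Set.mem_setOf_eq] at hz hw ⊢
    have hz1 : Ψ z.1 ≠ ⊤ := ne_top_of_le_ne_top (EReal.coe_ne_top _) hz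
    have hw1 : Ψ w.1 ≠ ⊤ := ne_top_of_le_ne_top (EReal.coe_ne_top _) hw
    set pz := (Ψ z.1).toReal
    set pw := (Ψ w.1).toReal
    have hpz : Ψ z.1 = (pz : EReal) := (EReal.coe_toReal hz1 (hbot _)).symm
    have hpw : Ψ w.1 = (pw : EReal) := (EReal.coe_toReal hw1 (hbot _)).symm
    have hpz2 : pz ≤ z.2 := by rw [hpz] at hz; exact_mod_cast hz
    have hpw2 : pw ≤ w.2 := by rw [hpw] at hw; exact_mod_cast hw
    have h1 := hconv z.1 w.1 a b ha hb hab
    rw [hpz, hpw] at h1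
    calc Ψ (a • z + b • w).1 = Ψ (a • z.1 + b • w.1) := rfl
      _ ≤ (a : EReal) * (pz : EReal) + (b : EReal) * (pw : EReal) := h1
      _ = ((a * pz + b * pw : ℝ) : EReal) := by
          rw [← EReal.coe_mul, ← EReal.coe_mul, ← EReal.coe_add]
      _ ≤ (((a • z + b • w).2 : ℝ) : EReal) := by
          apply EReal.coe_le_coe_iff.2
          have : (a • z + b • w).2 = a * z.2 + b * w.2 := rfl
          rw [this]
          exact add_le_add (mul_le_mul_of_nonneg_left hpz2 ha)
            (mul_le_mul_of_nonneg_left hpw2 hb)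
  set c : ℝ := (Ψ x₀).toReal
  have hc : Ψ x₀ = (c : EReal) := (EReal.coe_toReal hx₀ (hbot _)).symm
  have hpt : (x₀, c - 1) ∉ S := by
    simp only [hS, Set.mem_setOf_eq, hc, not_le]
    exact_mod_cast (by linarith : c - 1 < c)
  obtain ⟨φ, u, hφ1, hφ2⟩ := geometric_hahn_banach_point_closed hSconv hSclosed hpt
  set β : ℝ := φ (0, 1)
  have hdec : ∀ (y : H) (r : ℝ), φ (y, r) = φ (y, 0) + r * β := by
    intro y r
    have : (y, r) = (y, (0:ℝ)) + r • ((0:H), (1:ℝ)) := by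
      simp [Prod.ext_iff]
    rw [this, map_add, map_smul]
    simp [β, smul_eq_mul]
  have hβpos : 0 < β := by
    have h1 : φ (x₀, c - 1) < u := hφ1
    have h2 : u < φ (x₀, c) := hφ2 _ (by simp [hS, hc])
    rw [hdec] at h1 h2
    nlinarith
  refine ⟨(- β⁻¹) • φ.comp (ContinuousLinearMap.inl ℝ H ℝ), u / β, fun y => ?_⟩
  by_cases hy : Ψ y = ⊤
  · rw [hy]; exact le_top
  · set r : ℝ := (Ψ y).toReal
    have hr : Ψ y = (r : EReal) := (EReal.coe_toReal hy (hbot _)).symm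
    have hmem : (y, r) ∈ S := by simp [hS, hr]
    have h2 : u < φ (y, 0) + r * β := by rw [← hdec]; exact hφ2 _ hmem
    rw [hr]
    apply EReal.coe_le_coe_iff.2
    have hφy : ((- β⁻¹) • φ.comp (ContinuousLinearMap.inl ℝ H ℝ)) y = -β⁻¹ * φ (y, 0) := by
      simp [ContinuousLinearMap.smul_apply, ContinuousLinearMap.comp_apply,
        ContinuousLinearMap.inl_apply]
    rw [hφy]
    rw [div_eq_mul_inv]
    have hβ' : 0 < β⁻¹ := inv_pos.2 hβpos
    have h3 : u * β⁻¹ < φ (y, 0) * β⁻¹ + r := by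
      have h4 := mul_lt_mul_of_pos_right h2 hβ'
      rw [add_mul, mul_assoc, mul_inv_cancel₀ (ne_of_gt hβpos), mul_one] at h4
      exact h4
    linarith

set_option maxHeartbeats 1000000

/-- linear convergence of the objective gap δ_t = F(x^t) − F* for
sharpness exponent θ ∈ (1/2, 1]. -/
theorem statement3
    {H : Type*} [NormedAddCommGroup H] [InnerProductSpace ℝ H] [CompleteSpace H]
    (f : H → ℝ) (f' : H → H) (Ψ : H → EReal) (Ω : Set H) (Fstar : ℝ)
    (x : ℕ → H) (Hop : ℕ → H →L[ℝ] H) (p : ℕ → H) (α : ℕ → ℝ) (δ : ℕ → ℝ)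
    (M m ζ ξ θ η γ : ℝ)
    -- f convex and differentiable with gradient f'
    (hf_conv : ConvexOn ℝ Set.univ f)
    (hf_diff : ∀ y : H, HasGradientAt f (f' y) y)
    -- Ψ convex, proper, lower semicontinuous
    (hΨ_conv : ConvexEReal Ψ)
    (hΨ_proper : ProperEReal Ψ)
    (hΨ_lsc : LowerSemicontinuous Ψ)
    -- F* attained on the nonempty solution set Ω
    (hΩ_ne : Ω.Nonempty)
    (hΩ : ∀ y : H, y ∈ Ω ↔ objF f Ψ y = (Fstar : EReal))
    (hFstar_lb : ∀ y : H, (Fstar : EReal) ≤ objF f Ψ y)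
    -- sharpness with parameters ζ > 0, ξ > 0, θ ∈ (1/2, 1]
    (hζ : 0 < ζ) (hξ : 0 < ξ) (hθ : 1 / 2 < θ) (hθ1 : θ ≤ 1)
    (hsharp : ∀ y : H, ∀ d : ℝ, objF f Ψ y = ((Fstar + d : ℝ) : EReal) → d ≤ ξ →
      ζ * infDist y Ω ≤ d ^ θ)
    -- δ_t = F(x^t) − F*, with the initial point in the level set
    (hδ : ∀ t : ℕ, objF f Ψ (x t) = ((Fstar + δ t : ℝ) : EReal))
    (hδ0 : δ 0 ≤ ξ)
    -- iterate update x^{t+1} = x^t + α_t p^t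
    (hupdate : ∀ t : ℕ, x (t + 1) = x t + α t • p t)
    -- self-adjoint operators with M ⪰ H_t ⪰ m > 0
    (hm : 0 < m)
    (hH_sa : ∀ t : ℕ, ∀ u v : H, (inner ℝ (Hop t u) v : ℝ) = (inner ℝ u (Hop t v) : ℝ))
    (hH_lb : ∀ t : ℕ, ∀ u : H, m * ‖u‖ ^ 2 ≤ (inner ℝ u (Hop t u) : ℝ))
    (hH_ub : ∀ t : ℕ, ∀ u : H, (inner ℝ u (Hop t u) : ℝ) ≤ M * ‖u‖ ^ 2)
    -- multiplicative inexactness with parameter η ∈ [0,1)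
    (hη0 : 0 ≤ η) (hη1 : η < 1)
    (hinexact : ∀ t : ℕ,
      modelQ f' Ψ (Hop t) (x t) (p t) - (⨅ q : H, modelQ f' Ψ (Hop t) (x t) q) ≤
        (η : EReal) * -(⨅ q : H, modelQ f' Ψ (Hop t) (x t) q))
    -- step sizes α_t ∈ (0,1] satisfying the Armijo condition with parameter γ ∈ (0,1)
    (hγ0 : 0 < γ) (hγ1 : γ < 1)
    (hα : ∀ t : ℕ, 0 < α t ∧ α t ≤ 1)
    (harmijo : ∀ t : ℕ, objF f Ψ (x t + α t • p t) ≤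
      objF f Ψ (x t) + ((γ * α t : ℝ) : EReal) * modelQ f' Ψ (Hop t) (x t) (p t)) :
    -- (i) linear rate while δ_t is above the threshold
    (∀ t : ℕ, (ζ ^ 2 / M) ^ (1 / (2 * θ - 1)) < δ t →
      δ (t + 1) ≤ δ t * (1 - (1 - η) * α t * γ * ζ ^ 2 * ξ ^ (1 - 2 * θ) / (2 * M))) ∧
    -- (ii) after the threshold is first crossed, faster linear rate
    (∀ t₀ : ℕ, δ t₀ ≤ (ζ ^ 2 / M) ^ (1 / (2 * θ - 1)) →
      (∀ s : ℕ, s < t₀ → (ζ ^ 2 / M) ^ (1 / (2 * θ - 1)) < δ s) →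
      ∀ t : ℕ, t₀ ≤ t → δ (t + 1) ≤ δ t * (1 - (1 - η) * α t * γ / 2)) := by
  by_cases htriv : ∀ u : H, u = 0
  case pos =>
    obtain ⟨w, hw⟩ := hΩ_ne
    have hδt : ∀ t, δ t = 0 := by
      intro t
      have h1 : objF f Ψ w = (Fstar : EReal) := (hΩ w).1 hw
      have h2 := hδ t
      have hxw : x t = w := by rw [htriv (x t), htriv w]
      rw [hxw, h1] at h2
      have h3 := EReal.coe_eq_coe_iff.1 h2
      linarith
    constructor
    · intro t _; rw [hδt (t + 1), hδt t]; simp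
    · intro t₀ _ _ t _; rw [hδt (t + 1), hδt t]; simp
  case neg =>
  push_neg at htriv
  obtain ⟨u₀, hu₀⟩ := htriv
  have hn0 : 0 < ‖u₀‖ ^ 2 := by have := norm_pos_iff.mpr hu₀; positivity
  have hMm : m ≤ M := by nlinarith [hH_lb 0 u₀, hH_ub 0 u₀]
  have hM : 0 < M := lt_of_lt_of_le hm hMm
  obtain ⟨L, b, hLb⟩ := affine_minorant_aux hΨ_conv hΨ_proper hΨ_lsc
  have hδnn : ∀ t, 0 ≤ δ t := by
    intro t
    have h1 := hFstar_lb (x t)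
    rw [hδ t] at h1
    have h2 := EReal.coe_le_coe_iff.1 h1
    linarith
  set ψ : ℕ → ℝ := fun t => Fstar + δ t - f (x t) with hψ
  have hΨx : ∀ t, Ψ (x t) = ((ψ t : ℝ) : EReal) := by
    intro t
    have h : ((f (x t) : ℝ) : EReal) + Ψ (x t) = ((Fstar + δ t : ℝ) : EReal) := hδ t
    exact ereal_real_add_eq h
  have hfψ : ∀ t, f (x t) + ψ t = Fstar + δ t := by intro t; simp [hψ]
  -- the model at p = 0 has value 0
  have hQ0 : ∀ t, modelQ f' Ψ (Hop t) (x t) 0 = (0 : EReal) := by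
    intro t
    show (((inner ℝ (f' (x t)) (0:H) : ℝ) + (1 / 2) * (inner ℝ (0:H) ((Hop t) (0:H)) : ℝ) : ℝ) : EReal)
        + Ψ (x t + 0) - Ψ (x t) = 0
    rw [inner_zero_right, inner_zero_left, add_zero, hΨx t]
    norm_num
  -- real value of the infimum of the model
  set Qr : ℕ → ℝ := fun t => (⨅ q : H, modelQ f' Ψ (Hop t) (x t) q).toReal with hQrdef
  have hQco : ∀ t, (⨅ q : H, modelQ f' Ψ (Hop t) (x t) q) = ((Qr t : ℝ) : EReal) := by
    intro t
    have hub : (⨅ q : H, modelQ f' Ψ (Hop t) (x t) q) ≤ ((0:ℝ) : EReal) := by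
      rw [EReal.coe_zero, ← hQ0 t]; exact iInf_le _ 0
    set C : ℝ := -(‖f' (x t)‖ + ‖L‖) ^ 2 / (2 * m) + (L (x t) + b - ψ t) with hC
    have hlb : ∀ q : H, ((C : ℝ) : EReal) ≤ modelQ f' Ψ (Hop t) (x t) q := by
      intro q
      have h1 : -(‖f' (x t)‖ * ‖q‖) ≤ (inner ℝ (f' (x t)) q : ℝ) := by
        linarith [abs_real_inner_le_norm (f' (x t)) q,
          neg_abs_le (inner ℝ (f' (x t)) q : ℝ)]
      have h2 : -(‖L‖ * ‖q‖) ≤ L q := by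
        have h := L.le_opNorm q
        rw [Real.norm_eq_abs] at h
        linarith [neg_abs_le (L q)]
      have h3 : m * ‖q‖ ^ 2 ≤ (inner ℝ q (Hop t q) : ℝ) := hH_lb t q
      have h2m : (0:ℝ) < 2 * m := by linarith
      have hstep : -(‖f' (x t)‖ + ‖L‖) ^ 2 / (2 * m)
          ≤ (inner ℝ (f' (x t)) q : ℝ) + (1 / 2) * (inner ℝ q (Hop t q) : ℝ) + L q := by
        rw [div_le_iff₀ h2m]
        nlinarith [mul_le_mul_of_nonneg_right h1 h2m.le,
          mul_le_mul_of_nonneg_right h2 h2m.le,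
          mul_le_mul_of_nonneg_right h3 hm.le,
          sq_nonneg (m * ‖q‖ - (‖f' (x t)‖ + ‖L‖))]
      have hr1 : C ≤ (inner ℝ (f' (x t)) q : ℝ) + (1 / 2) * (inner ℝ q (Hop t q) : ℝ)
          + (L (x t + q) + b) - ψ t := by
        rw [hC, map_add L]
        linarith [hstep]
      calc ((C : ℝ) : EReal)
          ≤ (((inner ℝ (f' (x t)) q : ℝ) + (1 / 2) * (inner ℝ q (Hop t q) : ℝ)
            + (L (x t + q) + b) - ψ t : ℝ) : EReal) := EReal.coe_le_coe_iff.2 hr1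
        _ = (((inner ℝ (f' (x t)) q : ℝ) + (1 / 2) * (inner ℝ q (Hop t q) : ℝ) : ℝ) : EReal)
            + ((L (x t + q) + b : ℝ) : EReal) - ((ψ t : ℝ) : EReal) := by
            push_cast
            rfl
        _ ≤ modelQ f' Ψ (Hop t) (x t) q := by
            show _ ≤ (((inner ℝ (f' (x t)) q : ℝ) + (1 / 2) * (inner ℝ q (Hop t q) : ℝ) : ℝ) : EReal)
              + Ψ (x t + q) - Ψ (x t)
            rw [hΨx t, sub_eq_add_neg, sub_eq_add_neg]
            exact add_le_add_left (add_le_add_right (hLb _) _) _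
    have hlow : ((C : ℝ) : EReal) ≤ ⨅ q, modelQ f' Ψ (Hop t) (x t) q := le_iInf hlb
    have hnt : (⨅ q : H, modelQ f' Ψ (Hop t) (x t) q) ≠ ⊤ :=
      ne_top_of_le_ne_top (EReal.coe_ne_top 0) hub
    have hnb : (⨅ q : H, modelQ f' Ψ (Hop t) (x t) q) ≠ ⊥ :=
      (lt_of_lt_of_le (EReal.bot_lt_coe C) hlow).ne'
    exact (EReal.coe_toReal hnt hnb).symm
  have hQr_le0 : ∀ t, Qr t ≤ 0 := by
    intro t
    have h1 : (⨅ q : H, modelQ f' Ψ (Hop t) (x t) q) ≤ ((0:ℝ) : EReal) := by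
      rw [EReal.coe_zero, ← hQ0 t]; exact iInf_le _ 0
    rw [hQco t] at h1
    exact EReal.coe_le_coe_iff.1 h1
  -- one-step decrease
  have hkey1 : ∀ t, δ (t + 1) ≤ δ t + γ * α t * ((1 - η) * Qr t) := by
    intro t
    have hlow : ((Qr t : ℝ) : EReal) ≤ modelQ f' Ψ (Hop t) (x t) (p t) := by
      rw [← hQco t]; exact iInf_le _ (p t)
    have hup : modelQ f' Ψ (Hop t) (x t) (p t) ≤ (((1 - η) * Qr t : ℝ) : EReal) := by
      have h := hinexact t
      rw [hQco t, ← EReal.coe_neg, ← EReal.coe_mul] at h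
      have h2 := (EReal.sub_le_iff_le_add (Or.inl (EReal.coe_ne_bot _))
        (Or.inl (EReal.coe_ne_top _))).1 h
      calc modelQ f' Ψ (Hop t) (x t) (p t)
          ≤ ((η * -(Qr t) : ℝ) : EReal) + ((Qr t : ℝ) : EReal) := h2
        _ = (((1 - η) * Qr t : ℝ) : EReal) := by
            rw [← EReal.coe_add]; exact EReal.coe_eq_coe_iff.2 (by ring)
    have hnt : modelQ f' Ψ (Hop t) (x t) (p t) ≠ ⊤ :=
      ne_top_of_le_ne_top (EReal.coe_ne_top _) hup
    have hnb : modelQ f' Ψ (Hop t) (x t) (p t) ≠ ⊥ :=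
      (lt_of_lt_of_le (EReal.bot_lt_coe _) hlow).ne'
    set qp : ℝ := (modelQ f' Ψ (Hop t) (x t) (p t)).toReal with hqp
    have hco : modelQ f' Ψ (Hop t) (x t) (p t) = ((qp : ℝ) : EReal) :=
      (EReal.coe_toReal hnt hnb).symm
    have hqple : qp ≤ (1 - η) * Qr t := by
      rw [hco] at hup; exact EReal.coe_le_coe_iff.1 hup
    have h := harmijo t
    rw [← hupdate t, hδ (t + 1), hδ t, hco, ← EReal.coe_mul, ← EReal.coe_add] at h
    have h3 : Fstar + δ (t + 1) ≤ Fstar + δ t + γ * α t * qp := EReal.coe_le_coe_iff.1 h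
    have h4 : γ * α t * qp ≤ γ * α t * ((1 - η) * Qr t) :=
      mul_le_mul_of_nonneg_left hqple (mul_nonneg hγ0.le (hα t).1.le)
    linarith
  have hmono : ∀ t, δ (t + 1) ≤ δ t := by
    intro t
    have h1 := hkey1 t
    have h2 : γ * α t * ((1 - η) * Qr t) ≤ 0 :=
      mul_nonpos_of_nonneg_of_nonpos (mul_nonneg hγ0.le (hα t).1.le)
        (mul_nonpos_of_nonneg_of_nonpos (by linarith) (hQr_le0 t))
    linarith
  have hanti : ∀ s t : ℕ, s ≤ t → δ t ≤ δ s := by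
    intro s t hst
    induction t, hst using Nat.le_induction with
    | base => exact le_rfl
    | succ n hn ih => exact le_trans (hmono n) ih
  have hδξ : ∀ t, δ t ≤ ξ := fun t => le_trans (hanti 0 t (Nat.zero_le t)) hδ0
  -- upper bound on the model infimum via feasible directions toward Ω
  have hkey2 : ∀ t : ℕ, ∀ lam : ℝ, 0 < lam → lam ≤ 1 →
      Qr t ≤ -lam * δ t + M / (2 * ζ ^ 2) * lam ^ 2 * δ t ^ (2 * θ) := by
    intro t lam hl0 hl1
    set D := infDist (x t) Ω with hD
    have hD0 : 0 ≤ D := infDist_nonneg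
    have hDb : ζ * D ≤ δ t ^ θ := hsharp (x t) (δ t) (hδ t) (hδξ t)
    have hA : ∀ ε : ℝ, 0 < ε → Qr t ≤ -lam * δ t + M / 2 * lam ^ 2 * (D + ε) ^ 2 := by
      intro ε hε
      obtain ⟨w, hwΩ, hwd⟩ := (infDist_lt_iff hΩ_ne).1 (by linarith : infDist (x t) Ω < D + ε)
      have hobjw : ((f w : ℝ) : EReal) + Ψ w = ((Fstar : ℝ) : EReal) := (hΩ w).1 hwΩ
      have hΨw : Ψ w = ((Fstar - f w : ℝ) : EReal) := ereal_real_add_eq hobjw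
      set q : H := lam • (w - x t) with hq
      have hnq : ‖w - x t‖ ≤ D + ε := by
        rw [← dist_eq_norm, dist_comm]
        exact hwd.le
      have hr1 : (inner ℝ (f' (x t)) q : ℝ) ≤ lam * (f w - f (x t)) := by
        rw [hq, real_inner_smul_right]
        exact mul_le_mul_of_nonneg_left (grad_ineq_aux hf_conv hf_diff (x t) w) hl0.le
      have hr2 : (inner ℝ q (Hop t q) : ℝ) ≤ M * (lam ^ 2 * (D + ε) ^ 2) := by
        have h5 : ‖q‖ = lam * ‖w - x t‖ := by
          rw [hq, norm_smul, Real.norm_eq_abs, abs_of_pos hl0]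
        calc (inner ℝ q (Hop t q) : ℝ) ≤ M * ‖q‖ ^ 2 := hH_ub t q
          _ ≤ M * (lam ^ 2 * (D + ε) ^ 2) := by
              apply mul_le_mul_of_nonneg_left ?_ hM.le
              rw [h5, mul_pow]
              exact mul_le_mul_of_nonneg_left
                (pow_le_pow_left₀ (norm_nonneg _) hnq 2) (by positivity)
      have hΨq : Ψ (x t + q) ≤ (((1 - lam) * ψ t + lam * (Fstar - f w) : ℝ) : EReal) := by
        have hxq : x t + q = (1 - lam) • (x t) + lam • w := by
          rw [hq]; module
        rw [hxq]
        calc Ψ ((1 - lam) • x t + lam • w)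
            ≤ ((1 - lam : ℝ) : EReal) * Ψ (x t) + ((lam : ℝ) : EReal) * Ψ w :=
              hΨ_conv (x t) w (1 - lam) lam (by linarith) hl0.le (by ring)
          _ = (((1 - lam) * ψ t + lam * (Fstar - f w) : ℝ) : EReal) := by
              rw [hΨx t, hΨw, ← EReal.coe_mul, ← EReal.coe_mul, ← EReal.coe_add]
      have hub : modelQ f' Ψ (Hop t) (x t) q
          ≤ ((-lam * δ t + M / 2 * lam ^ 2 * (D + ε) ^ 2 : ℝ) : EReal) := by
        show (((inner ℝ (f' (x t)) q : ℝ) + (1 / 2) * (inner ℝ q (Hop t q) : ℝ) : ℝ) : EReal)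
            + Ψ (x t + q) - Ψ (x t) ≤ _
        rw [hΨx t]
        calc (((inner ℝ (f' (x t)) q : ℝ) + (1 / 2) * (inner ℝ q (Hop t q) : ℝ) : ℝ) : EReal)
              + Ψ (x t + q) - ((ψ t : ℝ) : EReal)
            ≤ (((inner ℝ (f' (x t)) q : ℝ) + (1 / 2) * (inner ℝ q (Hop t q) : ℝ) : ℝ) : EReal)
              + (((1 - lam) * ψ t + lam * (Fstar - f w) : ℝ) : EReal) - ((ψ t : ℝ) : EReal) := by
              rw [sub_eq_add_neg, sub_eq_add_neg]
              exact add_le_add_left (add_le_add_right hΨq _) _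
          _ ≤ ((-lam * δ t + M / 2 * lam ^ 2 * (D + ε) ^ 2 : ℝ) : EReal) := by
              have h6 := hfψ t
              have h6b : (inner ℝ (f' (x t)) q : ℝ) + (1 / 2) * (inner ℝ q (Hop t q) : ℝ)
                  + ((1 - lam) * ψ t + lam * (Fstar - f w)) - ψ t
                  ≤ -lam * δ t + M / 2 * lam ^ 2 * (D + ε) ^ 2 := by
                nlinarith [hr1, hr2]
              exact_mod_cast h6b
      have h7 : ((Qr t : ℝ) : EReal)
          ≤ ((-lam * δ t + M / 2 * lam ^ 2 * (D + ε) ^ 2 : ℝ) : EReal) := by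
        rw [← hQco t]
        exact le_trans (iInf_le _ q) hub
      exact EReal.coe_le_coe_iff.1 h7
    have hB : Qr t ≤ -lam * δ t + M / 2 * lam ^ 2 * D ^ 2 := by
      have hcont : Tendsto (fun ε : ℝ => -lam * δ t + M / 2 * lam ^ 2 * (D + ε) ^ 2) (𝓝[>] 0)
          (𝓝 (-lam * δ t + M / 2 * lam ^ 2 * (D + 0) ^ 2)) :=
        ((continuous_const.add (continuous_const.mul
          ((continuous_const.add continuous_id).pow 2))).tendsto 0).mono_left nhdsWithin_le_nhds
      have h8 := ge_of_tendsto hcont (eventually_nhdsWithin_of_forall (fun ε hε => hA ε hε))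
      simpa using h8
    have hD2 : M / 2 * lam ^ 2 * D ^ 2 ≤ M / (2 * ζ ^ 2) * lam ^ 2 * δ t ^ (2 * θ) := by
      have h9 : (ζ * D) ^ 2 ≤ (δ t ^ θ) ^ 2 := pow_le_pow_left₀ (by positivity) hDb 2
      have h10 : (δ t ^ θ) ^ 2 = δ t ^ (2 * θ) := by
        rw [← Real.rpow_natCast (δ t ^ θ) 2, ← Real.rpow_mul (hδnn t)]
        norm_num [mul_comm]
      rw [← h10]
      have h11 : D ^ 2 ≤ (δ t ^ θ) ^ 2 / ζ ^ 2 := by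
        rw [le_div_iff₀ (by positivity)]
        calc D ^ 2 * ζ ^ 2 = (ζ * D) ^ 2 := by ring
          _ ≤ (δ t ^ θ) ^ 2 := h9
      calc M / 2 * lam ^ 2 * D ^ 2 ≤ M / 2 * lam ^ 2 * ((δ t ^ θ) ^ 2 / ζ ^ 2) :=
            mul_le_mul_of_nonneg_left h11 (by positivity)
        _ = M / (2 * ζ ^ 2) * lam ^ 2 * (δ t ^ θ) ^ 2 := by
            field_simp
    linarith [hB, hD2]
  -- threshold computation
  have hθ' : (0:ℝ) < 2 * θ - 1 := by linarith
  have hKpos : 0 < (ζ ^ 2 / M) ^ (1 / (2 * θ - 1)) := Real.rpow_pos_of_pos (by positivity) _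
  have hKpow : ((ζ ^ 2 / M) ^ (1 / (2 * θ - 1))) ^ (2 * θ - 1) = ζ ^ 2 / M := by
    rw [← Real.rpow_mul (by positivity), one_div, inv_mul_cancel₀ hθ'.ne', Real.rpow_one]
  constructor
  · -- case (i)
    intro t ht
    have hδpos : 0 < δ t := lt_trans hKpos ht
    have hgt : ζ ^ 2 / M < δ t ^ (2 * θ - 1) := by
      calc ζ ^ 2 / M = ((ζ ^ 2 / M) ^ (1 / (2 * θ - 1))) ^ (2 * θ - 1) := hKpow.symm
        _ < δ t ^ (2 * θ - 1) := Real.rpow_lt_rpow hKpos.le ht hθ'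
    have hp2 : 0 < δ t ^ (2 * θ - 1) := Real.rpow_pos_of_pos hδpos _
    have hX : 0 < δ t ^ (1 - 2 * θ) := Real.rpow_pos_of_pos hδpos _
    set X := δ t ^ (1 - 2 * θ) with hXdef
    set lam := ζ ^ 2 * X / M with hlam
    have hlam0 : 0 < lam := by positivity
    have hXinv : X = (δ t ^ (2 * θ - 1))⁻¹ := by
      rw [hXdef, ← Real.rpow_neg (hδnn t)]
      norm_num
    have hlam1 : lam ≤ 1 := by
      rw [hlam, hXinv, div_le_one hM, mul_comm, ← div_eq_inv_mul, div_le_iff₀ hp2]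
      have h6 : ζ ^ 2 < δ t ^ (2 * θ - 1) * M := by
        rw [div_lt_iff₀ hM] at hgt; linarith
      linarith
    have hQb := hkey2 t lam hlam0 hlam1
    have e3 : X * δ t ^ (2 * θ) = δ t := by
      rw [hXdef, ← Real.rpow_add hδpos]
      norm_num
    have hQb2 : Qr t ≤ -(ζ ^ 2 * X / (2 * M)) * δ t := by
      have he : -lam * δ t + M / (2 * ζ ^ 2) * lam ^ 2 * δ t ^ (2 * θ)
          = -(ζ ^ 2 * X / (2 * M)) * δ t := by
        rw [hlam]
        field_simp
        linear_combination e3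
      linarith [hQb, he.le]
    have hXξ : ξ ^ (1 - 2 * θ) ≤ X :=
      Real.rpow_le_rpow_of_nonpos hδpos (hδξ t) (by linarith)
    have h7 : δ (t + 1) ≤ δ t + γ * α t * ((1 - η) * (-(ζ ^ 2 * X / (2 * M)) * δ t)) := by
      have := mul_le_mul_of_nonneg_left
        (mul_le_mul_of_nonneg_left hQb2 (by linarith : (0:ℝ) ≤ 1 - η))
        (mul_nonneg hγ0.le (hα t).1.le)
      linarith [hkey1 t]
    have h8 : -(ζ ^ 2 * X / (2 * M)) * δ t ≤ -(ζ ^ 2 * ξ ^ (1 - 2 * θ) / (2 * M)) * δ t := by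
      have h9 : ζ ^ 2 * ξ ^ (1 - 2 * θ) / (2 * M) ≤ ζ ^ 2 * X / (2 * M) := by
        apply div_le_div_of_nonneg_right ?_ (by positivity)
        exact mul_le_mul_of_nonneg_left hXξ (by positivity)
      nlinarith [hδnn t]
    have h10 : δ (t + 1) ≤ δ t + γ * α t * ((1 - η) * (-(ζ ^ 2 * ξ ^ (1 - 2 * θ) / (2 * M)) * δ t)) := by
      have := mul_le_mul_of_nonneg_left
        (mul_le_mul_of_nonneg_left h8 (by linarith : (0:ℝ) ≤ 1 - η))
        (mul_nonneg hγ0.le (hα t).1.le)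
      linarith
    have h11 : δ t * (1 - (1 - η) * α t * γ * ζ ^ 2 * ξ ^ (1 - 2 * θ) / (2 * M))
        = δ t + γ * α t * ((1 - η) * (-(ζ ^ 2 * ξ ^ (1 - 2 * θ) / (2 * M)) * δ t)) := by
      ring
    rw [h11]; exact h10
  · -- case (ii)
    intro t₀ h₀ _ t htt
    have hδt : δ t ≤ (ζ ^ 2 / M) ^ (1 / (2 * θ - 1)) := le_trans (hanti t₀ t htt) h₀
    have hQb := hkey2 t 1 one_pos le_rfl
    have h2θ : δ t ^ (2 * θ) ≤ δ t * (ζ ^ 2 / M) := by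
      rcases eq_or_lt_of_le (hδnn t) with h | h
      · rw [← h, Real.zero_rpow (by intro hc; simp at hc; linarith : 2 * θ ≠ 0)]
        simp
      · have e : δ t ^ (2 * θ) = δ t * δ t ^ (2 * θ - 1) := by
          nth_rewrite 1 [show 2 * θ = 1 + (2 * θ - 1) by ring]
          rw [Real.rpow_add h, Real.rpow_one]
        have hb : δ t ^ (2 * θ - 1) ≤ ζ ^ 2 / M := by
          calc δ t ^ (2 * θ - 1)
              ≤ ((ζ ^ 2 / M) ^ (1 / (2 * θ - 1))) ^ (2 * θ - 1) :=
                Real.rpow_le_rpow (hδnn t) hδt hθ'.le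
            _ = ζ ^ 2 / M := hKpow
        rw [e]
        exact mul_le_mul_of_nonneg_left hb h.le
    have hQb2 : Qr t ≤ -(δ t) / 2 := by
      have h12 : M / (2 * ζ ^ 2) * (δ t * (ζ ^ 2 / M)) = δ t / 2 := by
        field_simp
      have h13 : M / (2 * ζ ^ 2) * (1:ℝ) ^ 2 * δ t ^ (2 * θ)
          ≤ M / (2 * ζ ^ 2) * (δ t * (ζ ^ 2 / M)) := by
        rw [one_pow, mul_one]
        exact mul_le_mul_of_nonneg_left h2θ (by positivity)
      rw [h12] at h13
      linarith [hQb]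
    have h14 : δ (t + 1) ≤ δ t + γ * α t * ((1 - η) * (-(δ t) / 2)) := by
      have := mul_le_mul_of_nonneg_left
        (mul_le_mul_of_nonneg_left hQb2 (by linarith : (0:ℝ) ≤ 1 - η))
        (mul_nonneg hγ0.le (hα t).1.le)
      linarith [hkey1 t]
    have h15 : δ t * (1 - (1 - η) * α t * γ / 2)
        = δ t + γ * α t * ((1 - η) * (-(δ t) / 2)) := by ring
    rw [h15]; exact h14
end

section
/- (Bounds on subproblem suboptimality by the objective gap.) Let H be a real Hilbert space, f : H → ℝ differentiable, Ψ : H → ℝ ∪ {+∞} convex, proper and lower semicontinuous, and F = f + Ψ bounded below by F*. Let A be self-adjoint positive semidefinite, x a point with F(x) < +∞, and suppose p satisfies the multiplicative inexactness condition with parameter η ∈ [0,1) for Q_A(·; x), the step size α satisfies α ≥ ᾱ > 0 and the Armijo condition with parameter γ ∈ (0,1), and F(x + α p) ≥ F*. Then, writing δ = F(x) − F*, Q̂ = Q_A(p; x) and Q* = min_q Q_A(q; x), one has Q̂ − Q* ≤ η δ / (γ ᾱ (1 − η)) and −Q* ≤ δ / (γ ᾱ (1 − η)). -/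
open Metric Filter

/-- bounds on the subproblem suboptimality by the objective gap:
`Q̂ − Q* ≤ η δ / (γ ᾱ (1 − η))` and `−Q* ≤ δ / (γ ᾱ (1 − η))`, where Q* is the attained
minimum of the subproblem (at `qstar`). -/
theorem statement6
    {H : Type*} [NormedAddCommGroup H] [InnerProductSpace ℝ H] [CompleteSpace H]
    (f : H → ℝ) (f' : H → H) (Ψ : H → EReal) (Fstar : ℝ)
    (A : H →L[ℝ] H) (η γ α αbar δ : ℝ) (x p qstar : H)
    -- f differentiable with gradient f'
    (hf_diff : ∀ y : H, HasGradientAt f (f' y) y)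
    -- Ψ convex, proper, lower semicontinuous
    (hΨ_conv : ConvexEReal Ψ)
    (hΨ_proper : ProperEReal Ψ)
    (hΨ_lsc : LowerSemicontinuous Ψ)
    -- F bounded below by F*
    (hFstar_lb : ∀ y : H, (Fstar : EReal) ≤ objF f Ψ y)
    -- A self-adjoint positive semidefinite
    (hA_sa : ∀ u v : H, (inner ℝ (A u) v : ℝ) = (inner ℝ u (A v) : ℝ))
    (hA_psd : ∀ u : H, (0 : ℝ) ≤ (inner ℝ u (A u) : ℝ))
    -- x with F(x) < +∞ and δ = F(x) − F*
    (hδ : objF f Ψ x = ((Fstar + δ : ℝ) : EReal))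
    -- Q* = min_q Q_A(q; x) is attained at qstar
    (hqstar : ∀ q : H, modelQ f' Ψ A x qstar ≤ modelQ f' Ψ A x q)
    -- multiplicative inexactness condition with parameter η ∈ [0,1)
    (hη0 : 0 ≤ η) (hη1 : η < 1)
    (hinexact : modelQ f' Ψ A x p - modelQ f' Ψ A x qstar ≤
      (η : EReal) * -(modelQ f' Ψ A x qstar))
    -- step size α ≥ ᾱ > 0 satisfying the Armijo condition with parameter γ ∈ (0,1)
    (hγ0 : 0 < γ) (hγ1 : γ < 1) (hαbar : 0 < αbar) (hα : αbar ≤ α)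
    (harmijo : objF f Ψ (x + α • p) ≤
      objF f Ψ x + ((γ * α : ℝ) : EReal) * modelQ f' Ψ A x p)
    -- F(x + α p) ≥ F*
    (hnew : (Fstar : EReal) ≤ objF f Ψ (x + α • p)) :
    modelQ f' Ψ A x p - modelQ f' Ψ A x qstar ≤
      ((η * δ / (γ * αbar * (1 - η)) : ℝ) : EReal) ∧
    -(modelQ f' Ψ A x qstar) ≤ ((δ / (γ * αbar * (1 - η)) : ℝ) : EReal) := by

  obtain ⟨hbot, -⟩ := hΨ_proper
  -- Ψ x is real
  have hψx_top : Ψ x ≠ ⊤ := by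
    intro h
    rw [objF, h, EReal.add_top_of_ne_bot (EReal.coe_ne_bot (f x))] at hδ
    exact EReal.coe_ne_top _ hδ.symm
  obtain ⟨ψx, hψx⟩ : ∃ r : ℝ, Ψ x = (r : EReal) :=
    ⟨(Ψ x).toReal, (EReal.coe_toReal hψx_top (hbot x)).symm⟩
  -- Q* ≤ 0
  have h0 : modelQ f' Ψ A x 0 = 0 := by
    rw [modelQ, add_zero, hψx]
    simp [inner_zero_right, inner_zero_left, ← EReal.coe_sub]
  have hQ0 : modelQ f' Ψ A x qstar ≤ 0 := h0 ▸ hqstar 0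
  have htop : ∀ q : H, Ψ (x + q) = ⊤ → modelQ f' Ψ A x q = ⊤ := by
    intro q hq
    rw [modelQ, hq, hψx, EReal.add_top_of_ne_bot (EReal.coe_ne_bot _)]
    exact EReal.top_sub_coe _
  -- Q* is real
  have hqs_top : Ψ (x + qstar) ≠ ⊤ := by
    intro h
    rw [htop qstar h] at hQ0
    exact absurd hQ0 (by simp)
  obtain ⟨ψs, hψs⟩ : ∃ r : ℝ, Ψ (x + qstar) = (r : EReal) :=
    ⟨(Ψ (x + qstar)).toReal, (EReal.coe_toReal hqs_top (hbot _)).symm⟩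
  set rs : ℝ := (inner ℝ (f' x) qstar + 1 / 2 * inner ℝ qstar (A qstar) : ℝ) + ψs - ψx with hrs
  have hQs : modelQ f' Ψ A x qstar = (rs : EReal) := by
    rw [modelQ, hψs, hψx, hrs]
    rw [← EReal.coe_add, ← EReal.coe_sub]
  -- Q̂ is real
  have hqp_top : Ψ (x + p) ≠ ⊤ := by
    intro h
    rw [htop p h, hQs, EReal.top_sub_coe, ← EReal.coe_neg, ← EReal.coe_mul] at hinexact
    exact (EReal.coe_lt_top _).not_ge hinexact
  obtain ⟨ψp, hψp⟩ : ∃ r : ℝ, Ψ (x + p) = (r : EReal) :=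
    ⟨(Ψ (x + p)).toReal, (EReal.coe_toReal hqp_top (hbot _)).symm⟩
  set rp : ℝ := (inner ℝ (f' x) p + 1 / 2 * inner ℝ p (A p) : ℝ) + ψp - ψx with hrp
  have hQp : modelQ f' Ψ A x p = (rp : EReal) := by
    rw [modelQ, hψp, hψx, hrp]
    rw [← EReal.coe_add, ← EReal.coe_sub]
  -- real versions
  have hrs0 : rs ≤ 0 := by
    rw [hQs] at hQ0; exact_mod_cast hQ0
  have hinq : rp - rs ≤ η * (-rs) := by
    rw [hQp, hQs, ← EReal.coe_sub, ← EReal.coe_neg, ← EReal.coe_mul] at hinexact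
    exact_mod_cast hinexact
  have harm : Fstar ≤ Fstar + δ + γ * α * rp := by
    have h := le_trans hnew harmijo
    rw [hδ, hQp, ← EReal.coe_mul, ← EReal.coe_add] at h
    exact_mod_cast h
  have hd : 0 < γ * αbar * (1 - η) := mul_pos (mul_pos hγ0 hαbar) (by linarith)
  have hα0 : 0 < α := lt_of_lt_of_le hαbar hα
  have key : γ * αbar * (1 - η) * (-rs) ≤ δ := by
    nlinarith [mul_le_mul_of_nonneg_left hinq (le_of_lt (mul_pos hγ0 hα0)),
      mul_le_mul_of_nonneg_right (mul_le_mul_of_nonneg_left hα (le_of_lt hγ0))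
        (mul_nonneg (sub_nonneg.2 (le_of_lt hη1)) (neg_nonneg.2 hrs0))]
  constructor
  · rw [hQp, hQs, ← EReal.coe_sub, EReal.coe_le_coe_iff, div_eq_inv_mul, ← div_eq_inv_mul,
      le_div_iff₀ hd]
    nlinarith [mul_le_mul_of_nonneg_left key hη0]
  · rw [hQs, ← EReal.coe_neg, EReal.coe_le_coe_iff, le_div_iff₀ hd]
    nlinarith
end

section
/- (Global convergence of ISQA+, stationarity measure.) Let H be a real Hilbert space, f : H → ℝ differentiable with L-Lipschitz gradient, Ψ : H → ℝ ∪ {+∞} convex, proper and lower semicontinuous, F = f + Ψ with optimal value F* attained on a nonempty solution set Ω. Let (x^t) be a sequence with F(x^{t+1}) ≤ F(x^t) for all t, and let k_0 < k_1 < k_2 < ... be indices such that at each k_i there are a self-adjoint operator H_{k_i} with M̃ ⪰ H_{k_i} ⪰ m̃ > 0 and a direction p^{k_i} satisfying the multiplicative inexactness condition with parameter η ∈ [0,1), and x^{k_i + 1} = x^{k_i} + p^{k_i} with F(x^{k_i+1}) ≤ F(x^{k_i}) + γ Q_{H_{k_i}}(p^{k_i}; x^{k_i}) for γ ∈ (0,1).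 For each t let G_t be the minimizer of Q_I(·; x^t) (the subproblem with identity operator). Then ‖G_{k_t}‖ → 0 as t → ∞, and for all t ≥ 0: min_{0 ≤ i ≤ t} ‖G_{k_i}‖² ≤ ((F(x^0) − F*) / (γ (t+1))) · (M̃² (1 + m̃^{-1} + √(1 − 2M̃^{-1} + m̃^{-2}))²) / (2 (1 − η) m̃). Moreover, G_t = 0 if and only if 0 ∈ ∂F(x^t), so every limit point of (x^{k_t}) is a stationary point of F. -/
set_option maxHeartbeats 1000000

open Metric Filter

/-- The convex subdifferential of the extended-real-valued function `Ψ` at `x`. -/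
def subdiffPsi {H : Type*} [NormedAddCommGroup H] [InnerProductSpace ℝ H]
    (Ψ : H → EReal) (x : H) : Set H :=
  {v | ∀ z : H, Ψ x + ((inner ℝ v (z - x) : ℝ) : EReal) ≤ Ψ z}

/-- The generalized gradient `∂F(x) = ∇f(x) + ∂Ψ(x)` of `F = f + Ψ`. -/
def subdiffF {H : Type*} [NormedAddCommGroup H] [InnerProductSpace ℝ H]
    (f' : H → H) (Ψ : H → EReal) (x : H) : Set H :=
  {w | ∃ v ∈ subdiffPsi Ψ x, w = f' x + v}

/-! ### Auxiliary lemmas -/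

lemma le_zero_of_forall_small {c d : ℝ} (h : ∀ l : ℝ, 0 < l → l < 1 → c ≤ l * d) :
    c ≤ 0 := by
  by_contra h0
  push_neg at h0
  rcases le_or_gt d 0 with hd | hd
  · have := h (1/2) (by norm_num) (by norm_num); nlinarith
  · have hl1 : (0:ℝ) < min (1/2) (c/(2*d)) := by positivity
    have hl2 : min (1/2) (c/(2*d)) < 1 := lt_of_le_of_lt (min_le_left _ _) (by norm_num)
    have := h _ hl1 hl2
    have h3 : min (1/2) (c/(2*d)) * d ≤ (c/(2*d)) * d :=
      mul_le_mul_of_nonneg_right (min_le_right _ _) hd.le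
    have h4 : c / (2*d) * d = c / 2 := by field_simp
    nlinarith

section auxH
variable {H : Type*} [NormedAddCommGroup H] [InnerProductSpace ℝ H]

lemma modelQ_coe (f' : H → H) (Ψ : H → EReal) (A : H →L[ℝ] H) (x p : H)
    {a b : ℝ} (ha : Ψ x = (a : EReal)) (hb : Ψ (x + p) = (b : EReal)) :
    modelQ f' Ψ A x p
      = (((inner ℝ (f' x) p : ℝ) + (1 / 2) * (inner ℝ p (A p) : ℝ) + b - a : ℝ) : EReal) := by
  rw [modelQ, ha, hb, ← EReal.coe_add, ← EReal.coe_sub]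

lemma modelQ_top (f' : H → H) (Ψ : H → EReal) (A : H →L[ℝ] H) (x p : H)
    {a : ℝ} (ha : Ψ x = (a : EReal)) (hb : Ψ (x + p) = ⊤) :
    modelQ f' Ψ A x p = ⊤ := by
  rw [modelQ, ha, hb, EReal.coe_add_top, EReal.top_sub_coe]

lemma modelQ_zero (f' : H → H) (Ψ : H → EReal) (A : H →L[ℝ] H) (x : H)
    {a : ℝ} (ha : Ψ x = (a : EReal)) :
    modelQ f' Ψ A x 0 = 0 := by
  rw [modelQ_coe f' Ψ A x 0 ha (by simpa using ha)]; simp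

lemma modelQ_id_coe (f' : H → H) (Ψ : H → EReal) (x p : H)
    {a b : ℝ} (ha : Ψ x = (a : EReal)) (hb : Ψ (x + p) = (b : EReal)) :
    modelQ f' Ψ (ContinuousLinearMap.id ℝ H) x p
      = (((inner ℝ (f' x) p : ℝ) + (1 / 2) * ‖p‖ ^ 2 + b - a : ℝ) : EReal) := by
  rw [modelQ_coe f' Ψ _ x p ha hb]
  norm_num [ContinuousLinearMap.id_apply, real_inner_self_eq_norm_sq]

lemma segment_eq (z z' : H) (l : ℝ) : z + l • (z' - z) = l • z' + (1 - l) • z := by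
  rw [smul_sub, sub_smul, one_smul]; abel

lemma psi_segment {Ψ : H → EReal} (hconv : ConvexEReal Ψ) (hbot : ∀ y, Ψ y ≠ ⊥)
    (z z' : H) {Z W : ℝ} (hZ : Ψ z = (Z : EReal)) (hW : Ψ z' = (W : EReal))
    {l : ℝ} (hl0 : 0 ≤ l) (hl1 : l ≤ 1) :
    ∃ c : ℝ, Ψ (z + l • (z' - z)) = (c : EReal) ∧ c ≤ l * W + (1 - l) * Z := by
  have h := hconv z' z l (1 - l) hl0 (by linarith) (by ring)
  rw [hZ, hW, ← segment_eq] at h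
  rw [← EReal.coe_mul, ← EReal.coe_mul, ← EReal.coe_add] at h
  have hne : Ψ (z + l • (z' - z)) ≠ ⊤ := fun ht => by
    rw [ht] at h; exact absurd (top_le_iff.mp h) (EReal.coe_ne_top _)
  refine ⟨(Ψ (z + l • (z' - z))).toReal, (EReal.coe_toReal hne (hbot _)).symm, ?_⟩
  rw [← EReal.coe_toReal hne (hbot _)] at h
  exact_mod_cast h

/-- Key properties of the minimizer `G` of the identity model: finiteness of `Ψ (x+G)`
and the strong-convexity estimate `⟪∇f, G⟫ + Ψ(x+G) - Ψ(x) ≤ -‖G‖²`. -/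
lemma min_id_key {f' : H → H} {Ψ : H → EReal} (hconv : ConvexEReal Ψ)
    (hbot : ∀ y, Ψ y ≠ ⊥) {x G : H} {a : ℝ} (ha : Ψ x = (a : EReal))
    (hmin : ∀ q, modelQ f' Ψ (ContinuousLinearMap.id ℝ H) x G
      ≤ modelQ f' Ψ (ContinuousLinearMap.id ℝ H) x q) :
    ∃ b : ℝ, Ψ (x + G) = (b : EReal) ∧
      (inner ℝ (f' x) G : ℝ) + b - a ≤ -‖G‖ ^ 2 := by
  have h0 : modelQ f' Ψ (ContinuousLinearMap.id ℝ H) x G ≤ 0 := by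
    have := hmin 0
    rwa [modelQ_zero f' Ψ _ x ha] at this
  have hnt : Ψ (x + G) ≠ ⊤ := by
    intro ht
    rw [modelQ_top f' Ψ _ x G ha ht] at h0
    exact absurd (top_le_iff.mp h0) (by simp)
  set b := (Ψ (x + G)).toReal with hbdef
  have hb : Ψ (x + G) = (b : EReal) := (EReal.coe_toReal hnt (hbot _)).symm
  refine ⟨b, hb, ?_⟩
  have hn0 : (0:ℝ) ≤ ‖G‖ ^ 2 := by positivity
  have key : ∀ l : ℝ, 0 < l → l < 1 →
      (inner ℝ (f' x) G : ℝ) + b - a + ‖G‖ ^ 2 ≤ l * (‖G‖ ^ 2 / 2) := by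
    intro l hl0 hl1
    have hm0 : (0:ℝ) < 1 - l := by linarith
    have hm1 : (1:ℝ) - l ≤ 1 := by linarith
    obtain ⟨c, hc, hcle⟩ := psi_segment hconv hbot x (x + G) ha hb hm0.le hm1
    rw [add_sub_cancel_left] at hc
    have hcomp := hmin ((1 - l) • G)
    rw [modelQ_id_coe f' Ψ x G ha hb, modelQ_id_coe f' Ψ x ((1 - l) • G) ha hc,
      EReal.coe_le_coe_iff] at hcomp
    rw [real_inner_smul_right, norm_smul, Real.norm_eq_abs, abs_of_pos hm0,
      mul_pow] at hcomp
    have hstep : l * ((inner ℝ (f' x) G : ℝ) + b - a + ‖G‖ ^ 2)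
        ≤ l * (l * (‖G‖ ^ 2 / 2)) := by nlinarith [hcomp, hcle]
    exact le_of_mul_le_mul_left hstep hl0
  have := le_zero_of_forall_small (d := ‖G‖ ^ 2 / 2) key
  linarith

/-- A finite point satisfying a quadratic upper-subgradient inequality everywhere
is a point where `-g` is a subgradient. -/
lemma subdiff_of_quad {Ψ : H → EReal} (hconv : ConvexEReal Ψ) (hbot : ∀ y, Ψ y ≠ ⊥)
    (g z : H) {Z : ℝ} (hZ : Ψ z = (Z : EReal))
    (h : ∀ w : H, ∀ W : ℝ, Ψ w = (W : EReal) →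
      Z ≤ W + (inner ℝ g (w - z) : ℝ) + 1 / 2 * ‖w - z‖ ^ 2) :
    ∀ z' : H, Ψ z + ((inner ℝ (-g) (z' - z) : ℝ) : EReal) ≤ Ψ z' := by
  intro z'
  rcases eq_or_ne (Ψ z') ⊤ with hW' | hW'
  · rw [hW']; exact le_top
  have hW'c : Ψ z' = ((Ψ z').toReal : EReal) := (EReal.coe_toReal hW' (hbot _)).symm
  set W' : ℝ := (Ψ z').toReal
  have key : Z - W' - (inner ℝ g (z' - z) : ℝ) ≤ 0 := by
    apply le_zero_of_forall_small (d := ‖z' - z‖ ^ 2 / 2)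
    intro l hl0 hl1
    obtain ⟨c, hc, hcle⟩ := psi_segment hconv hbot z z' hZ hW'c hl0.le hl1.le
    have hq := h (z + l • (z' - z)) c hc
    rw [add_sub_cancel_left, real_inner_smul_right, norm_smul, Real.norm_eq_abs,
      abs_of_pos hl0, mul_pow] at hq
    have hstep : l * (Z - W' - (inner ℝ g (z' - z) : ℝ))
        ≤ l * (l * (‖z' - z‖ ^ 2 / 2)) := by nlinarith [hq, hcle]
    exact le_of_mul_le_mul_left hstep hl0
  rw [hZ, hW'c, inner_neg_left, ← EReal.coe_add, EReal.coe_le_coe_iff]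
  linarith

end auxH

lemma psi_real_of_objF {H : Type*} [NormedAddCommGroup H] [InnerProductSpace ℝ H]
    {f : H → ℝ} {Ψ : H → EReal} {y : H} {c : ℝ}
    (h : objF f Ψ y = (c : EReal)) (hbot : Ψ y ≠ ⊥) :
    Ψ y = ((c - f y : ℝ) : EReal) := by
  rw [objF] at h
  have hnt : Ψ y ≠ ⊤ := by
    intro ht; rw [ht, EReal.coe_add_top] at h; exact absurd h (by simp)
  rw [← EReal.coe_toReal hnt hbot, ← EReal.coe_add, EReal.coe_eq_coe_iff] at h
  rw [← EReal.coe_toReal hnt hbot, EReal.coe_eq_coe_iff]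
  linarith

/-- The key scalar inequality comparing the paper's constant with the step-size bound. -/
lemma scalar_key {mt Mt : ℝ} (hmt : 0 < mt) (hmM : mt ≤ Mt) :
    1 ≤ Mt ^ 2 * (1 + mt⁻¹ + Real.sqrt (1 - 2 * Mt⁻¹ + mt⁻¹ ^ 2)) ^ 2 / (2 * mt) *
      (min 1 Mt⁻¹ - (min 1 Mt⁻¹) ^ 2 * Mt / 2) := by
  have hM : 0 < Mt := lt_of_lt_of_le hmt hmM
  set s : ℝ := Real.sqrt (1 - 2 * Mt⁻¹ + mt⁻¹ ^ 2) with hs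
  have hs0 : 0 ≤ s := Real.sqrt_nonneg _
  have hinv : Mt⁻¹ ≤ mt⁻¹ := inv_anti₀ hmt hmM
  have habs : |1 - mt⁻¹| ≤ s := by
    rw [← Real.sqrt_sq_eq_abs]
    apply Real.sqrt_le_sqrt
    nlinarith
  have hu : mt * mt⁻¹ = 1 := mul_inv_cancel₀ hmt.ne'
  have hu0 : 0 < mt⁻¹ := by positivity
  set T : ℝ := 1 + mt⁻¹ + s with hT
  have hT0 : 0 < T := by positivity
  clear_value s T
  rcases le_or_gt 1 Mt with hM1 | hM1
  · -- case Mt ≥ 1 : α = Mt⁻¹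
    rw [min_eq_right (inv_le_one_of_one_le₀ hM1)]
    have hval : Mt ^ 2 * T ^ 2 / (2 * mt) * (Mt⁻¹ - (Mt⁻¹) ^ 2 * Mt / 2)
        = Mt * T ^ 2 / (4 * mt) := by field_simp; ring
    rw [hval, le_div_iff₀ (by positivity), one_mul]
    rcases le_or_gt 1 mt with hm1 | hm1
    · have h1 : 1 - mt⁻¹ ≤ s := le_trans (le_abs_self _) habs
      have h2 : (2:ℝ) ≤ T := by rw [hT]; linarith
      have h3 : (4:ℝ) ≤ T ^ 2 := by nlinarith
      nlinarith [mul_le_mul_of_nonneg_left h3 hM.le]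
    · have h1 : mt⁻¹ - 1 ≤ s := by linarith [neg_le_abs (1 - mt⁻¹), habs]
      have h2 : 2 * mt⁻¹ ≤ T := by rw [hT]; linarith
      have hui : 1 < mt⁻¹ := by
        rw [← hu]; nlinarith
      have h3 : 4 * mt⁻¹ ^ 2 ≤ T ^ 2 := by nlinarith
      have h4 : 4 * mt⁻¹ ^ 2 ≤ Mt * T ^ 2 := by nlinarith [mul_le_mul_of_nonneg_left h3 hM.le]
      have h5 : 4 * mt ≤ 4 * mt⁻¹ ^ 2 := by nlinarith
      linarith
  · -- case Mt < 1 : α = 1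
    rw [min_eq_left ((one_le_inv₀ hM).mpr hM1.le)]
    have hm1 : mt < 1 := lt_of_le_of_lt hmM hM1
    have h1 : mt⁻¹ - 1 ≤ s := by linarith [neg_le_abs (1 - mt⁻¹), habs]
    have h2 : 2 * mt⁻¹ ≤ T := by rw [hT]; linarith
    have h3 : 4 * mt⁻¹ ^ 2 ≤ T ^ 2 := by nlinarith
    have hval : Mt ^ 2 * T ^ 2 / (2 * mt) * (1 - 1 ^ 2 * Mt / 2)
        = Mt ^ 2 * T ^ 2 * (1 - Mt / 2) / (2 * mt) := by ring
    rw [hval, le_div_iff₀ (by positivity), one_mul]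
    have hMm2 : mt ^ 2 ≤ Mt ^ 2 := by nlinarith
    have hmm : mt ^ 2 * (4 * mt⁻¹ ^ 2) ≤ Mt ^ 2 * T ^ 2 :=
      mul_le_mul hMm2 h3 (by positivity) (by positivity)
    have h5 : mt ^ 2 * (4 * mt⁻¹ ^ 2) = 4 := by
      field_simp
    rw [h5] at hmm
    have h6 : 4 * (1 - Mt / 2) ≤ Mt ^ 2 * T ^ 2 * (1 - Mt / 2) :=
      mul_le_mul_of_nonneg_right hmm (by linarith)
    linarith
/-- The per-iteration sufficient decrease in terms of the stationarity measure. -/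
lemma per_step {H : Type*} [NormedAddCommGroup H] [InnerProductSpace ℝ H]
    {f : H → ℝ} {f' : H → H} {Ψ : H → EReal} (hconv : ConvexEReal Ψ)
    (hbot : ∀ y, Ψ y ≠ ⊥)
    {Mt mt η γ : ℝ} (hmt : 0 < mt) (hη0 : 0 ≤ η) (hη1 : η < 1) (hγ0 : 0 < γ)
    (Hop : H →L[ℝ] H)
    (hlb : ∀ u : H, mt * ‖u‖ ^ 2 ≤ (inner ℝ u (Hop u) : ℝ))
    (hub : ∀ u : H, (inner ℝ u (Hop u) : ℝ) ≤ Mt * ‖u‖ ^ 2)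
    (xb xn pp G : H) {Fv Fv' : ℝ}
    (hF : objF f Ψ xb = (Fv : EReal)) (hF' : objF f Ψ xn = (Fv' : EReal))
    (hGmin : ∀ q, modelQ f' Ψ (ContinuousLinearMap.id ℝ H) xb G
      ≤ modelQ f' Ψ (ContinuousLinearMap.id ℝ H) xb q)
    (hinexact : modelQ f' Ψ Hop xb pp - (⨅ q : H, modelQ f' Ψ Hop xb q)
      ≤ (η : EReal) * -(⨅ q : H, modelQ f' Ψ Hop xb q))
    (harmijo : objF f Ψ xn ≤ objF f Ψ xb + (γ : EReal) * modelQ f' Ψ Hop xb pp) :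
    γ * (1 - η) * ‖G‖ ^ 2
      ≤ Mt ^ 2 * (1 + mt⁻¹ + Real.sqrt (1 - 2 * Mt⁻¹ + mt⁻¹ ^ 2)) ^ 2 / (2 * mt)
        * (Fv - Fv') := by
  classical
  -- Ψ xb is real
  have hnt : Ψ xb ≠ ⊤ := by
    intro ht
    rw [objF, ht, EReal.coe_add_top] at hF
    exact absurd hF (by simp)
  have ha : Ψ xb = (((Ψ xb).toReal : ℝ) : EReal) := (EReal.coe_toReal hnt (hbot _)).symm
  set a : ℝ := (Ψ xb).toReal
  obtain ⟨b, hb, hkey⟩ := min_id_key hconv hbot ha hGmin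
  set gG : ℝ := inner ℝ (f' xb) G with hgGdef
  -- the infimum S of the H-model
  set S : EReal := ⨅ q : H, modelQ f' Ψ Hop xb q with hSdef
  have hS_le0 : S ≤ 0 := by
    rw [← modelQ_zero f' Ψ Hop xb ha]
    exact iInf_le _ 0
  -- lower bound for S
  set ρ : ℝ := min mt 1 with hρdef
  have hρ0 : 0 < ρ := lt_min hmt one_pos
  have hρ1 : ρ ≤ 1 := min_le_right _ _
  have hρm : ρ ≤ mt := min_le_left _ _
  have hqI : gG + 1/2 * ‖G‖^2 + b - a ≤ -1/2 * ‖G‖^2 := by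
    have : (0:ℝ) ≤ ‖G‖^2 := by positivity
    simp only [hgGdef]; linarith [hkey]
  have hS_lb : (((gG + 1/2 * ‖G‖^2 + b - a) / ρ : ℝ) : EReal) ≤ S := by
    apply le_iInf
    intro q
    rcases eq_or_ne (Ψ (xb + q)) ⊤ with hq | hq
    · rw [modelQ_top f' Ψ Hop xb q ha hq]; exact le_top
    set c : ℝ := (Ψ (xb + q)).toReal
    have hc : Ψ (xb + q) = (c : EReal) := (EReal.coe_toReal hq (hbot _)).symm
    obtain ⟨cρ, hcρ, hcρle⟩ := psi_segment hconv hbot xb (xb + q) ha hc hρ0.le hρ1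
    rw [add_sub_cancel_left] at hcρ
    have hmin2 := hGmin (ρ • q)
    rw [modelQ_id_coe f' Ψ xb G ha hb, modelQ_id_coe f' Ψ xb (ρ • q) ha hcρ,
      EReal.coe_le_coe_iff] at hmin2
    rw [real_inner_smul_right, norm_smul, Real.norm_eq_abs, abs_of_pos hρ0, mul_pow] at hmin2
    rw [modelQ_coe f' Ψ Hop xb q ha hc, EReal.coe_le_coe_iff]
    have hq_lb : mt * ‖q‖^2 ≤ (inner ℝ q (Hop q) : ℝ) := hlb q
    -- from hmin2 : gG + 1/2‖G‖² + b - a ≤ ρ⟪g,q⟫ + 1/2 ρ²‖q‖² + cρ - a, cρ ≤ ρ c + (1-ρ) a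
    -- conclude (gG + 1/2‖G‖² + b - a)/ρ ≤ ⟪g,q⟫ + 1/2 ⟪q,Hq⟫ + c - a
    rw [div_le_iff₀ hρ0, mul_comm]
    have hρ2 : ρ * (ρ/2 * ‖q‖^2) ≤ ρ * (1/2 * (inner ℝ q (Hop q) : ℝ)) := by
      apply mul_le_mul_of_nonneg_left _ hρ0.le
      nlinarith [hq_lb, sq_nonneg ‖q‖]
    nlinarith [hmin2, hcρle, hρ2]
  have hS_ne_bot : S ≠ ⊥ := fun h => by
    rw [h] at hS_lb; exact absurd (le_bot_iff.mp hS_lb) (EReal.coe_ne_bot _)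
  have hS_ne_top : S ≠ ⊤ := by
    intro h; rw [h, top_le_iff] at hS_le0; exact absurd hS_le0 (by simp)
  set q0 : ℝ := S.toReal with hq0def
  have hS : S = (q0 : EReal) := (EReal.coe_toReal hS_ne_top hS_ne_bot).symm
  have hq0_le0 : q0 ≤ 0 := by
    rw [hS] at hS_le0; exact_mod_cast hS_le0
  -- inexactness in real terms
  have hQp : ∃ rp : ℝ, modelQ f' Ψ Hop xb pp = (rp : EReal) ∧ rp ≤ (1 - η) * q0 := by
    have hpt : Ψ (xb + pp) ≠ ⊤ := by
      intro ht
      rw [modelQ_top f' Ψ Hop xb pp ha ht, hS, ← EReal.coe_neg, ← EReal.coe_mul,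
        EReal.top_sub_coe] at hinexact
      exact absurd (top_le_iff.mp hinexact) (EReal.coe_ne_top _)
    set cp : ℝ := (Ψ (xb + pp)).toReal
    have hcp : Ψ (xb + pp) = (cp : EReal) := (EReal.coe_toReal hpt (hbot _)).symm
    rw [modelQ_coe f' Ψ Hop xb pp ha hcp] at hinexact ⊢
    refine ⟨_, rfl, ?_⟩
    rw [hS, ← EReal.coe_neg, ← EReal.coe_mul, ← EReal.coe_sub, EReal.coe_le_coe_iff] at hinexact
    linarith
  obtain ⟨rp, hrp, hrple⟩ := hQp
  -- Armijo in real terms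
  have hdec : Fv' ≤ Fv + γ * rp := by
    rw [hF, hF', hrp, ← EReal.coe_mul, ← EReal.coe_add, EReal.coe_le_coe_iff] at harmijo
    exact harmijo
  have hγη : 0 ≤ γ * (1 - η) := by nlinarith
  have hrp0 : rp ≤ 0 := le_trans hrple (by nlinarith)
  set D : ℝ := Mt ^ 2 * (1 + mt⁻¹ + Real.sqrt (1 - 2 * Mt⁻¹ + mt⁻¹ ^ 2)) ^ 2 / (2 * mt)
    with hDdef
  have hD0 : 0 ≤ D := by
    rw [hDdef]; positivity
  rcases eq_or_ne G 0 with hG0 | hG0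
  · -- trivial case
    rw [hG0, norm_zero]
    have : Fv' ≤ Fv := by nlinarith
    nlinarith
  · -- main case : the space is nontrivial at G, so mt ≤ Mt
    have hn0 : 0 < ‖G‖^2 := pow_pos (norm_pos_iff.mpr hG0) 2
    have hmM : mt ≤ Mt := by
      have h1 := hlb G
      have h2 := hub G
      nlinarith
    have hM : 0 < Mt := lt_of_lt_of_le hmt hmM
    set α : ℝ := min 1 Mt⁻¹ with hαdef
    have hα0 : 0 < α := lt_min one_pos (by positivity)
    have hα1 : α ≤ 1 := min_le_left _ _
    -- upper bound on S via α • G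
    obtain ⟨cα, hcα, hcαle⟩ := psi_segment hconv hbot xb (xb + G) ha hb hα0.le hα1
    rw [add_sub_cancel_left] at hcα
    have hub2 : S ≤ ((α * (gG + b - a) + α^2 * Mt * ‖G‖^2 / 2 : ℝ) : EReal) := by
      refine le_trans (iInf_le _ (α • G)) ?_
      rw [modelQ_coe f' Ψ Hop xb (α • G) ha hcα, EReal.coe_le_coe_iff]
      have hsm : (inner ℝ (α • G) (Hop (α • G)) : ℝ) = α^2 * (inner ℝ G (Hop G) : ℝ) := by
        rw [map_smul, real_inner_smul_left, real_inner_smul_right]; ring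
      rw [real_inner_smul_right, hsm]
      have := hub G
      nlinarith [sq_nonneg α]
    rw [hS, EReal.coe_le_coe_iff] at hub2
    -- q0 ≤ -(α - α²Mt/2)‖G‖²
    have hq0ub : q0 ≤ -((α - α^2 * Mt/2) * ‖G‖^2) := by
      have hC : gG + b - a ≤ -‖G‖^2 := hkey
      nlinarith [mul_le_mul_of_nonneg_left hC hα0.le]
    have hscalar := scalar_key hmt hmM
    rw [← hDdef, ← hαdef] at hscalar
    -- assemble
    have e1 : γ * (1 - η) * ((α - α^2*Mt/2) * ‖G‖^2) ≤ Fv - Fv' := by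
      nlinarith [hrple, hdec, hq0ub]
    have e2 : D * (γ * (1 - η) * ((α - α^2*Mt/2) * ‖G‖^2)) ≤ D * (Fv - Fv') :=
      mul_le_mul_of_nonneg_left e1 hD0
    have e3 : γ * (1 - η) * ‖G‖^2 ≤ D * (γ * (1 - η) * ((α - α^2*Mt/2) * ‖G‖^2)) := by
      have := mul_le_mul_of_nonneg_left hscalar (mul_nonneg hγη hn0.le)
      nlinarith [this]
    linarith
/-- global convergence of ISQA⁺ in terms of the stationarity measure
`G_t = argmin_p Q_I(p; x^t)`: `‖G_{k_t}‖ → 0`, a `O(1/t)` bound on the minimum squared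
measure, characterization of stationarity, and stationarity of all limit points. -/
theorem statement10
    {H : Type*} [NormedAddCommGroup H] [InnerProductSpace ℝ H] [CompleteSpace H]
    (f : H → ℝ) (f' : H → H) (Ψ : H → EReal) (Ω : Set H) (Fstar : ℝ)
    (x : ℕ → H) (k : ℕ → ℕ) (Hop : ℕ → H →L[ℝ] H) (p : ℕ → H) (G : ℕ → H)
    (L Mt mt η γ δ0 : ℝ)
    -- f differentiable with L-Lipschitz gradient f'
    (hf_diff : ∀ y : H, HasGradientAt f (f' y) y)
    (hL : 0 < L)
    (hLip : ∀ a b : H, ‖f' a - f' b‖ ≤ L * ‖a - b‖)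
    -- Ψ convex, proper, lower semicontinuous
    (hΨ_conv : ConvexEReal Ψ)
    (hΨ_proper : ProperEReal Ψ)
    (hΨ_lsc : LowerSemicontinuous Ψ)
    -- F* attained on the nonempty solution set Ω
    (hΩ_ne : Ω.Nonempty)
    (hΩ : ∀ y : H, y ∈ Ω ↔ objF f Ψ y = (Fstar : EReal))
    (hFstar_lb : ∀ y : H, (Fstar : EReal) ≤ objF f Ψ y)
    -- δ0 = F(x^0) − F*
    (hδ0 : objF f Ψ (x 0) = ((Fstar + δ0 : ℝ) : EReal))
    -- monotone iterates
    (hmono : ∀ t : ℕ, objF f Ψ (x (t + 1)) ≤ objF f Ψ (x t))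
    -- strictly increasing indices k_0 < k_1 < ...
    (hk : StrictMono k)
    -- self-adjoint operators with M̃ ⪰ H_{k_i} ⪰ m̃ > 0
    (hmt : 0 < mt)
    (hH_sa : ∀ i : ℕ, ∀ u v : H, (inner ℝ (Hop i u) v : ℝ) = (inner ℝ u (Hop i v) : ℝ))
    (hH_lb : ∀ i : ℕ, ∀ u : H, mt * ‖u‖ ^ 2 ≤ (inner ℝ u (Hop i u) : ℝ))
    (hH_ub : ∀ i : ℕ, ∀ u : H, (inner ℝ u (Hop i u) : ℝ) ≤ Mt * ‖u‖ ^ 2)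
    -- multiplicative inexactness with parameter η ∈ [0,1) at the iterations k_i
    (hη0 : 0 ≤ η) (hη1 : η < 1)
    (hinexact : ∀ i : ℕ,
      modelQ f' Ψ (Hop i) (x (k i)) (p i) -
        (⨅ q : H, modelQ f' Ψ (Hop i) (x (k i)) q) ≤
      (η : EReal) * -(⨅ q : H, modelQ f' Ψ (Hop i) (x (k i)) q))
    -- update and sufficient decrease with unit step size, γ ∈ (0,1)
    (hγ0 : 0 < γ) (hγ1 : γ < 1)
    (hstep : ∀ i : ℕ, x (k i + 1) = x (k i) + p i)
    (harmijo : ∀ i : ℕ, objF f Ψ (x (k i + 1)) ≤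
      objF f Ψ (x (k i)) + (γ : EReal) * modelQ f' Ψ (Hop i) (x (k i)) (p i))
    -- G_t is the minimizer of the subproblem with the identity operator
    (hGmin : ∀ t : ℕ, ∀ q : H,
      modelQ f' Ψ (ContinuousLinearMap.id ℝ H) (x t) (G t) ≤
        modelQ f' Ψ (ContinuousLinearMap.id ℝ H) (x t) q) :
    -- ‖G_{k_t}‖ → 0
    Tendsto (fun t : ℕ => ‖G (k t)‖) atTop (nhds 0) ∧
    -- O(1/t) bound on the minimal squared stationarity measure
    (∀ t : ℕ,
      ((Finset.range (t + 1)).inf' (Finset.nonempty_range_iff.mpr (Nat.succ_ne_zero t))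
        (fun i => ‖G (k i)‖ ^ 2)) ≤
      δ0 / (γ * ((t : ℝ) + 1)) *
        (Mt ^ 2 * (1 + mt⁻¹ + Real.sqrt (1 - 2 * Mt⁻¹ + mt⁻¹ ^ 2)) ^ 2 /
          (2 * (1 - η) * mt))) ∧
    -- G_t = 0 iff 0 ∈ ∂F(x^t)
    (∀ t : ℕ, G t = 0 ↔ (0 : H) ∈ subdiffF f' Ψ (x t)) ∧
    -- every limit point of (x^{k_t}) is stationary
    (∀ z : H, MapClusterPt z atTop (fun t : ℕ => x (k t)) →
      (0 : H) ∈ subdiffF f' Ψ z) := by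
  classical
  obtain ⟨hbot, w₀, hw₀⟩ := hΨ_proper
  -- the objective takes real values along the iterates
  have hmonot : Antitone (fun t => objF f Ψ (x t)) := antitone_nat_of_succ_le hmono
  have hFub : ∀ t, objF f Ψ (x t) ≤ ((Fstar + δ0 : ℝ) : EReal) := fun t =>
    hδ0 ▸ hmonot (Nat.zero_le t)
  have hFne_top : ∀ t, objF f Ψ (x t) ≠ ⊤ := fun t ht => by
    have := hFub t; rw [ht, top_le_iff] at this; exact absurd this (EReal.coe_ne_top _)
  have hFne_bot : ∀ t, objF f Ψ (x t) ≠ ⊥ := fun t hb => by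
    have := hFstar_lb (x t); rw [hb, le_bot_iff] at this; exact absurd this (by simp)
  set Fr : ℕ → ℝ := fun t => (objF f Ψ (x t)).toReal with hFrdef
  have hFrc : ∀ t, objF f Ψ (x t) = ((Fr t : ℝ) : EReal) := fun t =>
    (EReal.coe_toReal (hFne_top t) (hFne_bot t)).symm
  have hFr_anti : ∀ {s t : ℕ}, s ≤ t → Fr t ≤ Fr s := by
    intro s t hst
    have h := hmonot hst
    simp only at h
    rw [hFrc s, hFrc t, EReal.coe_le_coe_iff] at h
    exact h
  have hFr_lb : ∀ t, Fstar ≤ Fr t := fun t => by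
    have := hFstar_lb (x t)
    rw [hFrc t, EReal.coe_le_coe_iff] at this
    exact this
  have hFr0 : Fr 0 = Fstar + δ0 := by
    have := hδ0; rw [hFrc 0, EReal.coe_eq_coe_iff] at this; exact this
  have hψreal : ∀ t, Ψ (x t) = ((Fr t - f (x t) : ℝ) : EReal) := fun t =>
    psi_real_of_objF (hFrc t) (hbot _)
  -- the per-iteration decrease
  set D : ℝ := Mt ^ 2 * (1 + mt⁻¹ + Real.sqrt (1 - 2 * Mt⁻¹ + mt⁻¹ ^ 2)) ^ 2 / (2 * mt)
    with hDdef
  have hD0 : 0 ≤ D := by rw [hDdef]; positivity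
  have hstep' : ∀ i : ℕ, γ * (1 - η) * ‖G (k i)‖ ^ 2 ≤ D * (Fr (k i) - Fr (k i + 1)) :=
    fun i =>
      per_step hΨ_conv hbot hmt hη0 hη1 hγ0 (Hop i) (hH_lb i) (hH_ub i)
        (x (k i)) (x (k i + 1)) (p i) (G (k i)) (hFrc (k i)) (hFrc (k i + 1))
        (hGmin (k i)) (hinexact i) (harmijo i)
  have hpos : 0 < γ * (1 - η) := by nlinarith
  -- telescoping sum
  have hsum : ∀ n : ℕ, ∑ i ∈ Finset.range n, γ * (1 - η) * ‖G (k i)‖ ^ 2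
      ≤ D * Fr 0 - D * Fr (k n) := by
    intro n
    induction n with
    | zero =>
      simp only [Finset.range_zero, Finset.sum_empty]
      have := mul_le_mul_of_nonneg_left (hFr_anti (Nat.zero_le (k 0))) hD0
      linarith
    | succ n ih =>
      rw [Finset.sum_range_succ]
      have h1 := hstep' n
      have h2 : k n + 1 ≤ k (n + 1) := hk (Nat.lt_succ_self n)
      have h3 := mul_le_mul_of_nonneg_left (hFr_anti h2) hD0
      nlinarith [h1, h3]
  have htot : ∀ n : ℕ, γ * (1 - η) * ∑ i ∈ Finset.range n, ‖G (k i)‖ ^ 2 ≤ D * δ0 := by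
    intro n
    rw [Finset.mul_sum]
    have h1 := hsum n
    have h2 := mul_le_mul_of_nonneg_left (hFr_lb (k n)) hD0
    have h3 : D * Fr 0 = D * Fstar + D * δ0 := by rw [hFr0]; ring
    linarith
  have hpartial : ∀ n : ℕ, ∑ i ∈ Finset.range n, ‖G (k i)‖ ^ 2 ≤ D * δ0 / (γ * (1 - η)) :=
    fun n => (le_div_iff₀ hpos).mpr (by rw [mul_comm]; exact htot n)
  -- Part 1 : ‖G (k t)‖ → 0
  have hsummable : Summable (fun i => ‖G (k i)‖ ^ 2) :=
    summable_of_sum_range_le (fun i => by positivity) hpartial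
  have ht2 : Tendsto (fun i => ‖G (k i)‖ ^ 2) atTop (nhds 0) :=
    hsummable.tendsto_atTop_zero
  have part1 : Tendsto (fun t : ℕ => ‖G (k t)‖) atTop (nhds 0) := by
    have h := (Real.continuous_sqrt.tendsto 0).comp ht2
    rw [Real.sqrt_zero] at h
    exact h.congr fun i => Real.sqrt_sq (norm_nonneg _)
  -- Part 2 : O(1/t) bound
  have part2 : ∀ t : ℕ,
      ((Finset.range (t + 1)).inf' (Finset.nonempty_range_iff.mpr (Nat.succ_ne_zero t))
        (fun i => ‖G (k i)‖ ^ 2)) ≤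
      δ0 / (γ * ((t : ℝ) + 1)) *
        (Mt ^ 2 * (1 + mt⁻¹ + Real.sqrt (1 - 2 * Mt⁻¹ + mt⁻¹ ^ 2)) ^ 2 /
          (2 * (1 - η) * mt)) := by
    intro t
    set m : ℝ := (Finset.range (t + 1)).inf'
      (Finset.nonempty_range_iff.mpr (Nat.succ_ne_zero t)) (fun i => ‖G (k i)‖ ^ 2)
      with hmdef
    have hm_le : ∀ i ∈ Finset.range (t + 1), m ≤ ‖G (k i)‖ ^ 2 := fun i hi =>
      Finset.inf'_le _ hi
    have hcard := Finset.card_nsmul_le_sum (Finset.range (t + 1))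
      (fun i => ‖G (k i)‖ ^ 2) m hm_le
    rw [Finset.card_range, nsmul_eq_mul] at hcard
    push_cast at hcard
    have hη1' : (0:ℝ) < 1 - η := by linarith
    have hRHS : δ0 / (γ * ((t : ℝ) + 1)) *
        (Mt ^ 2 * (1 + mt⁻¹ + Real.sqrt (1 - 2 * Mt⁻¹ + mt⁻¹ ^ 2)) ^ 2 /
          (2 * (1 - η) * mt))
        = D * δ0 / (γ * (1 - η) * ((t : ℝ) + 1)) := by
      rw [hDdef]
      have htpos : (0:ℝ) < (t : ℝ) + 1 := by positivity
      field_simp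
    rw [hRHS, le_div_iff₀ (by positivity)]
    have h1 := mul_le_mul_of_nonneg_left hcard hpos.le
    have h2 := htot (t + 1)
    push_cast at h2
    nlinarith [h1, h2]
  -- Part 3 : stationarity characterization
  have part3 : ∀ t : ℕ, G t = 0 ↔ (0 : H) ∈ subdiffF f' Ψ (x t) := by
    intro t
    have ha := hψreal t
    constructor
    · intro hG0
      refine ⟨-f' (x t), ?_, by simp⟩
      apply subdiff_of_quad hΨ_conv hbot (f' (x t)) (x t) ha
      intro w W hW
      have hq := hGmin t (w - x t)
      have hw : x t + (w - x t) = w := by abel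
      rw [hG0, modelQ_zero f' Ψ _ (x t) ha,
        modelQ_id_coe f' Ψ (x t) (w - x t) ha (by rw [hw]; exact hW)] at hq
      have hq' : (0:ℝ) ≤ (inner ℝ (f' (x t)) (w - x t) : ℝ) + 1 / 2 * ‖w - x t‖ ^ 2 + W
          - (Fr t - f (x t)) := by exact_mod_cast hq
      linarith
    · rintro ⟨v, hv, h0⟩
      have hveq : v = -f' (x t) := eq_neg_of_add_eq_zero_right h0.symm
      obtain ⟨b, hb, hkey⟩ := min_id_key hΨ_conv hbot ha (hGmin t)
      have hsub := hv (x t + G t)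
      rw [ha, hb, add_sub_cancel_left, hveq, inner_neg_left, ← EReal.coe_add,
        EReal.coe_le_coe_iff] at hsub
      have hn : ‖G t‖ ^ 2 ≤ 0 := by linarith [hkey, hsub]
      have h2 : ‖G t‖ ^ 2 = 0 := le_antisymm hn (by positivity)
      exact norm_eq_zero.mp ((pow_eq_zero_iff (by norm_num : (2:ℕ) ≠ 0)).mp h2)
  -- Part 4 : limit points are stationary
  refine ⟨part1, part2, part3, ?_⟩
  intro z hz
  obtain ⟨φ, hφmono, hφtend⟩ := Filter.subseq_tendsto_of_neBot hz
  set y : ℕ → H := fun j => x (k (φ j)) with hydef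
  have hGj : Tendsto (fun j => ‖G (k (φ j))‖) atTop (nhds 0) :=
    part1.comp hφmono.tendsto_atTop
  have hGj' : Tendsto (fun j => G (k (φ j))) atTop (nhds 0) :=
    tendsto_zero_iff_norm_tendsto_zero.mpr hGj
  have hyG : Tendsto (fun j => y j + G (k (φ j))) atTop (nhds z) := by
    have := hφtend.add hGj'
    rwa [add_zero] at this
  have hgj : Tendsto (fun j => f' (y j)) atTop (nhds (f' z)) := by
    rw [tendsto_iff_norm_sub_tendsto_zero]
    have hb : Tendsto (fun j => L * ‖y j - z‖) atTop (nhds 0) := by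
      have h1 : Tendsto (fun j => ‖y j - z‖) atTop (nhds 0) := by
        have := (hφtend.sub_const z).norm
        rwa [sub_self, norm_zero] at this
      have := h1.const_mul L
      rwa [mul_zero] at this
    exact squeeze_zero (fun j => norm_nonneg _) (fun j => hLip (y j) z) hb
  have claim : ∀ w : H, ∀ W : ℝ, Ψ w = (W : EReal) →
      Ψ z ≤ ((W + (inner ℝ (f' z) (w - z) : ℝ) + 1 / 2 * ‖w - z‖ ^ 2 : ℝ) : EReal) := by
    intro w W hW
    have hbound : ∀ j, ∃ bj : ℝ, Ψ (y j + G (k (φ j))) = (bj : EReal) ∧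
        bj ≤ W + (inner ℝ (f' (y j)) (w - y j) : ℝ) + 1 / 2 * ‖w - y j‖ ^ 2
          - (inner ℝ (f' (y j)) (G (k (φ j))) : ℝ) - 1 / 2 * ‖G (k (φ j))‖ ^ 2 := by
      intro j
      have ha := hψreal (k (φ j))
      obtain ⟨bj, hbj, _⟩ := min_id_key hΨ_conv hbot ha (hGmin (k (φ j)))
      refine ⟨bj, hbj, ?_⟩
      have hq := hGmin (k (φ j)) (w - y j)
      have hw : y j + (w - y j) = w := by abel
      rw [modelQ_id_coe f' Ψ _ _ ha hbj,
        modelQ_id_coe f' Ψ _ (w - y j) ha (by rw [hw]; exact hW),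
        EReal.coe_le_coe_iff] at hq
      linarith
    have hR : Tendsto (fun j => W + (inner ℝ (f' (y j)) (w - y j) : ℝ)
        + 1 / 2 * ‖w - y j‖ ^ 2 - (inner ℝ (f' (y j)) (G (k (φ j))) : ℝ)
        - 1 / 2 * ‖G (k (φ j))‖ ^ 2) atTop
        (nhds (W + (inner ℝ (f' z) (w - z) : ℝ) + 1 / 2 * ‖w - z‖ ^ 2)) := by
      have h1 : Tendsto (fun j => (inner ℝ (f' (y j)) (w - y j) : ℝ)) atTop
          (nhds (inner ℝ (f' z) (w - z))) :=
        hgj.inner (tendsto_const_nhds.sub hφtend)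
      have h2 : Tendsto (fun j => ‖w - y j‖ ^ 2) atTop (nhds (‖w - z‖ ^ 2)) :=
        ((tendsto_const_nhds.sub hφtend).norm).pow 2
      have h3 : Tendsto (fun j => (inner ℝ (f' (y j)) (G (k (φ j))) : ℝ)) atTop
          (nhds 0) := by
        have h3' : Tendsto (fun j => (inner ℝ (f' (y j)) (G (k (φ j))) : ℝ)) atTop
            (nhds ((inner ℝ (f' z) (0:H) : ℝ))) := hgj.inner hGj'
        rwa [inner_zero_right] at h3'
      have h4 : Tendsto (fun j => ‖G (k (φ j))‖ ^ 2) atTop (nhds 0) := by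
        have := hGj.pow 2
        rwa [show (0:ℝ) ^ 2 = 0 by norm_num] at this
      have := (((tendsto_const_nhds (x := W)).add h1).add
        ((h2.const_mul (1/2 : ℝ)))).sub h3 |>.sub (h4.const_mul (1/2 : ℝ))
      simpa using this
    by_contra hcon
    push_neg at hcon
    obtain ⟨c, hc1, hc2⟩ := EReal.exists_between_coe_real hcon
    have hev : ∀ᶠ j in atTop, (c : EReal) < Ψ (y j + G (k (φ j))) :=
      hyG.eventually (hΨ_lsc z (c : EReal) hc2)
    have hev2 : ∀ᶠ j in atTop, c ≤ W + (inner ℝ (f' (y j)) (w - y j) : ℝ)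
        + 1 / 2 * ‖w - y j‖ ^ 2 - (inner ℝ (f' (y j)) (G (k (φ j))) : ℝ)
        - 1 / 2 * ‖G (k (φ j))‖ ^ 2 := by
      filter_upwards [hev] with j hj
      obtain ⟨bj, hbj, hble⟩ := hbound j
      rw [hbj, EReal.coe_lt_coe_iff] at hj
      linarith
    have := ge_of_tendsto hR hev2
    rw [EReal.coe_lt_coe_iff] at hc1
    linarith
  -- Ψ z is finite
  have hw₀c : Ψ w₀ = ((Ψ w₀).toReal : EReal) := (EReal.coe_toReal hw₀ (hbot _)).symm
  have hzne : Ψ z ≠ ⊤ := by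
    intro ht
    have := claim w₀ _ hw₀c
    rw [ht, top_le_iff] at this
    exact absurd this (EReal.coe_ne_top _)
  have hzc : Ψ z = ((Ψ z).toReal : EReal) := (EReal.coe_toReal hzne (hbot _)).symm
  refine ⟨-f' z, ?_, by simp⟩
  apply subdiff_of_quad hΨ_conv hbot (f' z) z hzc
  intro w W hW
  have := claim w W hW
  rw [hzc, EReal.coe_le_coe_iff] at this
  linarith
end

section
/- (Global O(1/t) rate of ISQA+ for convex f.) Under the setting of the global convergence theorem for ISQA+ — f convex and L-smooth, Ψ convex proper lsc, Ω ≠ ∅, monotone iterates F(x^{t+1}) ≤ F(x^t), indices k_t at which M̃ ⪰ H_{k_t} ⪰ m̃ > 0, p^{k_t} satisfies the multiplicative inexactness condition with parameter η ∈ [0,1), and F(x^{k_t+1}) ≤ F(x^{k_t}) + γ Q_{H_{k_t}}(p^{k_t}; x^{k_t}) with x^{k_t+1} = x^{k_t} + p^{k_t} — suppose in addition R₀ := sup { ‖x − P_Ω(x)‖ : F(x) ≤ F(x^0) } < ∞. Then: (a) whenever F(x^{k_t}) − F* ≥ M̃ R₀², one has F(x^{k_t+1}) − F* ≤ (1 −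 γ(1−η)/2)(F(x^{k_t}) − F*); (b) letting t₀ be the first index with F(x^{k_{t₀}}) − F* < M̃ R₀², for all t ≥ t₀ one has F(x^{k_t}) − F* ≤ 2 M̃ R₀² / (γ (1 − η)(t − t₀) + 2), and t₀ ≤ max{0, 1 + (2/(γ(1−η))) log((F(x^0) − F*)/(M̃ R₀²))}. -/
open Metric Filter Topology

lemma ereal_add_eq {a b : ℝ} {w : EReal} (hw : w ≠ ⊥) (h : (a : EReal) + w = (b : ℝ)) :
    w = ((b - a : ℝ) : EReal) := by
  induction w using EReal.rec with
  | bot => exact absurd rfl hw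
  | coe r =>
      rw [← EReal.coe_add] at h
      norm_cast at h ⊢
      linarith
  | top =>
      rw [EReal.add_top_of_ne_bot (by simp)] at h
      exact absurd h.symm (EReal.coe_ne_top b)

lemma grad_ineq {H : Type*} [NormedAddCommGroup H] [InnerProductSpace ℝ H] [CompleteSpace H]
    {f : H → ℝ} {f' : H → H} (hf : ConvexOn ℝ Set.univ f)
    (hd : ∀ y, HasGradientAt f (f' y) y) (a b : H) :
    f a + inner ℝ (f' a) (b - a) ≤ f b := by
  set φ : ℝ → ℝ := fun t => f (a + t • (b - a)) with hφ
  have hline : ∀ t : ℝ, a + t • (b - a) = AffineMap.lineMap a b t := by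
    intro t; simp [AffineMap.lineMap_apply, vsub_eq_sub]; abel
  have hφconv : ConvexOn ℝ Set.univ φ := by
    have := hf.comp_affineMap (AffineMap.lineMap a b (k := ℝ))
    simp only [Set.preimage_univ] at this
    rw [show φ = f ∘ AffineMap.lineMap a b from by funext t; simp [hφ, hline t, Function.comp]]
    exact this
  have hder : ∀ t : ℝ, HasDerivAt φ (inner ℝ (f' (a + t • (b - a))) (b - a)) t := by
    intro t
    have hc : HasDerivAt (fun t : ℝ => a + t • (b - a)) (b - a) t := by
      simpa using ((hasDerivAt_id t).smul_const (b - a)).const_add a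
    have hg := hasGradientAt_iff_hasFDerivAt.mp (hd (a + t • (b - a)))
    have := hg.comp_hasDerivAt t hc
    simp at this; exact this
  have h0 := hder 0
  simp only [zero_smul, add_zero] at h0
  have := hφconv.le_slope_of_hasDerivAt (Set.mem_univ (0:ℝ)) (Set.mem_univ (1:ℝ)) one_pos h0
  rw [slope_def_field] at this
  have hφ1 : φ 1 = f b := by simp [hφ]
  have hφ0 : φ 0 = f a := by simp [hφ]
  rw [hφ1, hφ0] at this
  simp at this
  linarith

lemma psi_affine_minorant {H : Type*} [NormedAddCommGroup H] [InnerProductSpace ℝ H]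
    [CompleteSpace H] {Ψ : H → EReal} (hconv : ConvexEReal Ψ) (hproper : ProperEReal Ψ)
    (hlsc : LowerSemicontinuous Ψ) :
    ∃ (g : H →L[ℝ] ℝ) (c : ℝ), ∀ z : H, ((g z + c : ℝ) : EReal) ≤ Ψ z := by
  obtain ⟨hbot, x₁, hx₁⟩ := hproper
  set S : Set (H × ℝ) := {q | Ψ q.1 ≤ (q.2 : EReal)} with hS
  -- S is closed
  have hclosed : IsClosed S := by
    rw [← isOpen_compl_iff]
    rw [isOpen_iff_mem_nhds]
    rintro ⟨z, s⟩ hzs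
    simp only [Set.mem_compl_iff, hS, Set.mem_setOf_eq, not_le] at hzs
    obtain ⟨y, hsy, hyΨ⟩ := EReal.exists_between_coe_real hzs
    have h1 : {w : H | (y : EReal) < Ψ w} ∈ 𝓝 z := hlsc z y hyΨ
    have h2 : {r : ℝ | r < y} ∈ 𝓝 s := by
      exact Iio_mem_nhds (by exact_mod_cast hsy)
    have := Filter.prod_mem_prod h1 h2
    rw [← nhds_prod_eq] at this
    refine Filter.mem_of_superset this ?_
    rintro ⟨w, r⟩ ⟨hw, hr⟩
    simp only [Set.mem_setOf_eq] at hw hr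
    simp only [Set.mem_compl_iff, hS, Set.mem_setOf_eq, not_le]
    exact lt_trans (by exact_mod_cast hr) hw
  -- S is convex
  have hconvS : Convex ℝ S := by
    rintro ⟨z1, s1⟩ h1 ⟨z2, s2⟩ h2 a b ha hb hab
    simp only [hS, Set.mem_setOf_eq] at h1 h2 ⊢
    simp only [Prod.smul_mk, Prod.mk_add_mk, smul_eq_mul]
    have hz1t : Ψ z1 ≠ ⊤ := fun h => by simp [h] at h1
    have hz2t : Ψ z2 ≠ ⊤ := fun h => by simp [h] at h2
    have e1 : Ψ z1 = ((Ψ z1).toReal : EReal) := (EReal.coe_toReal hz1t (hbot z1)).symm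
    have e2 : Ψ z2 = ((Ψ z2).toReal : EReal) := (EReal.coe_toReal hz2t (hbot z2)).symm
    have key := hconv z1 z2 a b ha hb hab
    rw [e1] at key h1
    rw [e2] at key h2
    calc Ψ (a • z1 + b • z2) ≤ (a : EReal) * ((Ψ z1).toReal : EReal)
          + (b : EReal) * ((Ψ z2).toReal : EReal) := key
      _ = ((a * (Ψ z1).toReal + b * (Ψ z2).toReal : ℝ) : EReal) := by
          rw [← EReal.coe_mul, ← EReal.coe_mul, ← EReal.coe_add]
      _ ≤ ((a * s1 + b * s2 : ℝ) : EReal) := by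
          have g1 : (Ψ z1).toReal ≤ s1 := by exact_mod_cast h1
          have g2 : (Ψ z2).toReal ≤ s2 := by exact_mod_cast h2
          exact_mod_cast add_le_add (mul_le_mul_of_nonneg_left g1 ha)
            (mul_le_mul_of_nonneg_left g2 hb)
  set r₁ : ℝ := (Ψ x₁).toReal with hr₁
  have ex₁ : Ψ x₁ = (r₁ : EReal) := (EReal.coe_toReal hx₁ (hbot x₁)).symm
  have hpt : ((x₁, r₁ - 1) : H × ℝ) ∉ S := by
    simp only [hS, Set.mem_setOf_eq, not_le, ex₁]
    exact_mod_cast sub_one_lt r₁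
  obtain ⟨φ, u, hφS, hφpt⟩ := geometric_hahn_banach_closed_point hconvS hclosed hpt
  -- decompose φ
  set β : ℝ := φ (0, 1) with hβ
  have hdecomp : ∀ (z : H) (s : ℝ), φ (z, s) = φ (z, 0) + s * β := by
    intro z s
    have : (z, s) = (z, (0:ℝ)) + s • ((0:H), (1:ℝ)) := by simp [Prod.ext_iff]
    rw [this, map_add, map_smul]
    simp [hβ, smul_eq_mul]
  have hβneg : β < 0 := by
    rcases lt_trichotomy β 0 with h | h | h
    · exact h
    · exfalso
      have h1 : ((x₁, r₁) : H × ℝ) ∈ S := by simp [hS, ex₁]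
      have h2 := hφS _ h1
      rw [hdecomp] at h2 hφpt
      rw [h] at h2 hφpt
      simp at h2 hφpt
      linarith
    · exfalso
      -- take s large
      have hmem : ∀ n : ℕ, ((x₁, r₁ + n) : H × ℝ) ∈ S := by
        intro n
        simp only [hS, Set.mem_setOf_eq, ex₁]
        exact_mod_cast le_add_of_nonneg_right n.cast_nonneg
      obtain ⟨n, hn⟩ := exists_nat_gt ((u - φ (x₁, 0) - r₁ * β) / β)
      have h2 := hφS _ (hmem n)
      rw [hdecomp] at h2
      have : (u - φ (x₁, 0) - r₁ * β) / β * β < n * β :=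
        (mul_lt_mul_of_pos_right ?_ h) |>.trans_eq rfl
      · rw [div_mul_cancel₀ _ (ne_of_gt h)] at this
        nlinarith
      · exact hn
  refine ⟨(-1/β) • (φ.comp (ContinuousLinearMap.inl ℝ H ℝ)), u/β, ?_⟩
  intro z
  by_cases hzt : Ψ z = ⊤
  · simp [hzt]
  · have ez : Ψ z = (((Ψ z).toReal : ℝ) : EReal) := (EReal.coe_toReal hzt (hbot z)).symm
    have hmem : ((z, (Ψ z).toReal) : H × ℝ) ∈ S := by
      simp only [hS, Set.mem_setOf_eq]
      exact le_of_eq ez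
    have h2 := hφS _ hmem
    rw [hdecomp] at h2
    rw [ez]
    apply EReal.coe_le_coe_iff.mpr
    simp only [ContinuousLinearMap.smul_apply, ContinuousLinearMap.comp_apply,
      ContinuousLinearMap.inl_apply, smul_eq_mul]
    have hβ' : β ≠ 0 := ne_of_lt hβneg
    rw [div_mul_eq_mul_div, neg_one_mul]
    rw [← add_div]
    rw [div_le_iff_of_neg hβneg]
    nlinarith [h2]

lemma rate_rec {a w c MR T : ℝ} (hMR : 0 < MR) (hc0 : 0 < c) (hc1 : c < 1)
    (ha0 : 0 ≤ a) (haM : a ≤ MR) (hw0 : 0 ≤ w) (hT : 2 ≤ T)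
    (hih : a * T ≤ 2 * MR) (hw : w ≤ a - c * (a ^ 2 / (2 * MR))) :
    w * (T + c) ≤ 2 * MR := by
  have h1 : w * (T + c) ≤ (a - c * (a ^ 2 / (2 * MR))) * (T + c) :=
    mul_le_mul_of_nonneg_right hw (by linarith)
  have h2 : (a - c * (a ^ 2 / (2 * MR))) * (T + c) * (2 * MR) ≤ 2 * MR * (2 * MR) := by
    have expand : (a - c * (a ^ 2 / (2 * MR))) * (T + c) * (2 * MR)
        = a * (T + c) * (2 * MR) - c * (T + c) * a ^ 2 := by
      field_simp
    rw [expand]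
    nlinarith [mul_nonneg (by linarith : (0:ℝ) ≤ 2 * MR - a * T)
      (by nlinarith : (0:ℝ) ≤ 2 * MR - c * a), sq_nonneg (c * a)]
  have h3 : (a - c * (a ^ 2 / (2 * MR))) * (T + c) ≤ 2 * MR := by nlinarith [h2, hMR]
  linarith

set_option maxHeartbeats 1600000 in
/-- global O(1/t) rate of ISQA⁺ for convex f, where
`R₀ = sup {‖z − P_Ω(z)‖ : F(z) ≤ F(x^0)} < ∞` and `δ_t = F(x^t) − F*`. -/
theorem statement11
    {H : Type*} [NormedAddCommGroup H] [InnerProductSpace ℝ H] [CompleteSpace H]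
    (f : H → ℝ) (f' : H → H) (Ψ : H → EReal) (Ω : Set H) (Fstar : ℝ)
    (x : ℕ → H) (k : ℕ → ℕ) (Hop : ℕ → H →L[ℝ] H) (p : ℕ → H) (δ : ℕ → ℝ)
    (L Mt mt η γ R0 : ℝ) (t₀ : ℕ)
    -- f convex and L-smooth with gradient f'
    (hf_conv : ConvexOn ℝ Set.univ f)
    (hf_diff : ∀ y : H, HasGradientAt f (f' y) y)
    (hL : 0 < L)
    (hLip : ∀ a b : H, ‖f' a - f' b‖ ≤ L * ‖a - b‖)
    -- Ψ convex, proper, lower semicontinuous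
    (hΨ_conv : ConvexEReal Ψ)
    (hΨ_proper : ProperEReal Ψ)
    (hΨ_lsc : LowerSemicontinuous Ψ)
    -- F* attained on the nonempty solution set Ω
    (hΩ_ne : Ω.Nonempty)
    (hΩ : ∀ y : H, y ∈ Ω ↔ objF f Ψ y = (Fstar : EReal))
    (hFstar_lb : ∀ y : H, (Fstar : EReal) ≤ objF f Ψ y)
    -- δ_t = F(x^t) − F*
    (hδ : ∀ t : ℕ, objF f Ψ (x t) = ((Fstar + δ t : ℝ) : EReal))
    -- monotone iterates
    (hmono : ∀ t : ℕ, objF f Ψ (x (t + 1)) ≤ objF f Ψ (x t))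
    -- strictly increasing indices k_0 < k_1 < ...
    (hk : StrictMono k)
    -- self-adjoint operators with M̃ ⪰ H_{k_i} ⪰ m̃ > 0
    (hmt : 0 < mt)
    (hH_sa : ∀ i : ℕ, ∀ u v : H, (inner ℝ (Hop i u) v : ℝ) = (inner ℝ u (Hop i v) : ℝ))
    (hH_lb : ∀ i : ℕ, ∀ u : H, mt * ‖u‖ ^ 2 ≤ (inner ℝ u (Hop i u) : ℝ))
    (hH_ub : ∀ i : ℕ, ∀ u : H, (inner ℝ u (Hop i u) : ℝ) ≤ Mt * ‖u‖ ^ 2)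
    -- multiplicative inexactness with parameter η ∈ [0,1) at the iterations k_i
    (hη0 : 0 ≤ η) (hη1 : η < 1)
    (hinexact : ∀ i : ℕ,
      modelQ f' Ψ (Hop i) (x (k i)) (p i) -
        (⨅ q : H, modelQ f' Ψ (Hop i) (x (k i)) q) ≤
      (η : EReal) * -(⨅ q : H, modelQ f' Ψ (Hop i) (x (k i)) q))
    -- update and sufficient decrease with unit step size, γ ∈ (0,1)
    (hγ0 : 0 < γ) (hγ1 : γ < 1)
    (hstep : ∀ i : ℕ, x (k i + 1) = x (k i) + p i)
    (harmijo : ∀ i : ℕ, objF f Ψ (x (k i + 1)) ≤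
      objF f Ψ (x (k i)) + (γ : EReal) * modelQ f' Ψ (Hop i) (x (k i)) (p i))
    -- R₀ is the supremum of the distances to Ω over the initial level set, R₀ < ∞
    (hR0 : IsLUB {r : ℝ | ∃ z : H, objF f Ψ z ≤ objF f Ψ (x 0) ∧ r = infDist z Ω} R0)
    -- t₀ is the first index with δ_{k_{t₀}} < M̃ R₀²
    (ht₀ : δ (k t₀) < Mt * R0 ^ 2)
    (ht₀_first : ∀ s : ℕ, s < t₀ → ¬ δ (k s) < Mt * R0 ^ 2) :
    -- (a) linear decrease while the gap is at least M̃ R₀²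
    (∀ t : ℕ, Mt * R0 ^ 2 ≤ δ (k t) →
      δ (k t + 1) ≤ (1 - γ * (1 - η) / 2) * δ (k t)) ∧
    -- (b) O(1/t) rate after t₀, and a bound on t₀
    (∀ t : ℕ, t₀ ≤ t →
      δ (k t) ≤ 2 * Mt * R0 ^ 2 / (γ * (1 - η) * ((t : ℝ) - (t₀ : ℝ)) + 2)) ∧
    (t₀ : ℝ) ≤ max 0 (1 + 2 / (γ * (1 - η)) * Real.log (δ 0 / (Mt * R0 ^ 2))) := by
  have hδ0 : ∀ t, 0 ≤ δ t := by
    intro t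
    have h := hFstar_lb (x t)
    rw [hδ t] at h
    have h2 : Fstar ≤ Fstar + δ t := by exact_mod_cast h
    linarith
  have hδmono : ∀ t, δ (t + 1) ≤ δ t := by
    intro t
    have h := hmono t
    rw [hδ t, hδ (t + 1)] at h
    have h2 : Fstar + δ (t + 1) ≤ Fstar + δ t := by exact_mod_cast h
    linarith
  have hδanti : Antitone δ := antitone_nat_of_succ_le hδmono
  have hlev : ∀ t, objF f Ψ (x t) ≤ objF f Ψ (x 0) := by
    intro t
    rw [hδ t, hδ 0]
    have := hδanti (Nat.zero_le t)
    exact_mod_cast (by linarith : Fstar + δ t ≤ Fstar + δ 0)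
  have hR0nn : 0 ≤ R0 :=
    le_trans infDist_nonneg (hR0.1 ⟨x 0, le_refl _, rfl⟩)
  have hMR : 0 < Mt * R0 ^ 2 := lt_of_le_of_lt (hδ0 (k t₀)) ht₀
  have hR0pos : 0 < R0 := by
    rcases eq_or_lt_of_le hR0nn with h | h
    · rw [← h] at hMR; simp at hMR
    · exact h
  have hMtpos : 0 < Mt := by nlinarith
  have hψx : ∀ t, Ψ (x t) = ((Fstar + δ t - f (x t) : ℝ) : EReal) := by
    intro t
    have h := hδ t
    rw [objF] at h
    exact ereal_add_eq (hΨ_proper.1 (x t)) h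
  obtain ⟨g, c, haff⟩ := psi_affine_minorant hΨ_conv hΨ_proper hΨ_lsc
  set Qpr : ℕ → ℝ := fun i =>
    ((inner ℝ (f' (x (k i))) (p i) : ℝ) + (1 / 2) * (inner ℝ (p i) (Hop i (p i)) : ℝ))
      + (Fstar + δ (k i + 1) - f (x (k i + 1)))
      - (Fstar + δ (k i) - f (x (k i))) with hQprdef
  have hQp : ∀ i, modelQ f' Ψ (Hop i) (x (k i)) (p i) = ((Qpr i : ℝ) : EReal) := by
    intro i
    simp only [modelQ]
    rw [← hstep i, hψx (k i + 1), hψx (k i), hQprdef]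
    norm_cast
  have hQbot : ∀ i, (⨅ q : H, modelQ f' Ψ (Hop i) (x (k i)) q) ≠ ⊥ := by
    intro i
    set y := x (k i) with hy
    set C : ℝ := ‖f' y‖ + ‖g‖ with hC
    set K : ℝ := (g y + c) - (Fstar + δ (k i) - f y) with hK
    set B : ℝ := K - C ^ 2 / (2 * mt) with hB
    clear_value C K B
    have hlow : ∀ q : H, ((B : ℝ) : EReal) ≤ modelQ f' Ψ (Hop i) y q := by
      intro q
      simp only [modelQ]
      rw [hψx (k i)]
      have h1 : ((g (y + q) + c : ℝ) : EReal) ≤ Ψ (y + q) := haff (y + q)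
      have e1 : -(‖f' y‖ * ‖q‖) ≤ (inner ℝ (f' y) q : ℝ) :=
        (abs_le.mp (abs_real_inner_le_norm (f' y) q)).1
      have e2 : mt * ‖q‖ ^ 2 ≤ (inner ℝ q (Hop i q) : ℝ) := hH_lb i q
      have e3 : -(‖g‖ * ‖q‖) ≤ g q := by
        have h4 := g.le_opNorm q
        rw [Real.norm_eq_abs] at h4
        exact (abs_le.mp h4).1
      calc ((B : ℝ) : EReal)
          ≤ (((inner ℝ (f' y) q : ℝ) + (1 / 2) * (inner ℝ q (Hop i q) : ℝ)
              + (g (y + q) + c) - (Fstar + δ (k i) - f y) : ℝ) : EReal) := by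
            apply EReal.coe_le_coe_iff.mpr
            rw [map_add]
            have haux : C * ‖q‖ - mt / 2 * ‖q‖ ^ 2 ≤ C ^ 2 / (2 * mt) := by
              rw [le_div_iff₀ (by positivity)]
              nlinarith [sq_nonneg (mt * ‖q‖ - C)]
            have hCq : C * ‖q‖ = ‖f' y‖ * ‖q‖ + ‖g‖ * ‖q‖ := by rw [hC]; ring
            simp only [hB, hK]
            linarith [e1, e2, e3, haux, hCq]
        _ ≤ (((inner ℝ (f' y) q : ℝ) + (1 / 2) * (inner ℝ q (Hop i q) : ℝ) : ℝ) : EReal)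
              + Ψ (y + q) - ((Fstar + δ (k i) - f y : ℝ) : EReal) := by
            have hsplit : (((inner ℝ (f' y) q : ℝ) + (1 / 2) * (inner ℝ q (Hop i q) : ℝ)
                + (g (y + q) + c) - (Fstar + δ (k i) - f y) : ℝ) : EReal)
                = ((((inner ℝ (f' y) q : ℝ) + (1 / 2) * (inner ℝ q (Hop i q) : ℝ) : ℝ) : EReal)
                  + ((g (y + q) + c : ℝ) : EReal))
                  - ((Fstar + δ (k i) - f y : ℝ) : EReal) := by
              rw [← EReal.coe_add, ← EReal.coe_sub]
            rw [hsplit]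
            exact EReal.sub_le_sub (add_le_add_right h1 _) (le_refl _)
    intro hbotc
    have hle := le_iInf hlow
    rw [hbotc, le_bot_iff] at hle
    exact EReal.coe_ne_bot B hle
  have hkey' : ∀ (i : ℕ) (lam r : ℝ), 0 ≤ lam → lam ≤ 1 → R0 < r →
      δ (k i + 1) ≤ δ (k i) + γ * (1 - η) * (-lam * δ (k i) + lam ^ 2 * Mt * r ^ 2 / 2) := by
    intro i lam r hl0 hl1 hr
    have hinf : infDist (x (k i)) Ω ≤ R0 := hR0.1 ⟨x (k i), hlev (k i), rfl⟩
    obtain ⟨xs, hxsΩ, hdist⟩ := (infDist_lt_iff hΩ_ne).mp (lt_of_le_of_lt hinf hr)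
    have hψs : Ψ xs = ((Fstar - f xs : ℝ) : EReal) := by
      have h := (hΩ xs).mp hxsΩ
      rw [objF] at h
      exact ereal_add_eq (hΨ_proper.1 xs) h
    have hnd : ‖xs - x (k i)‖ < r := by
      rw [dist_eq_norm'] at hdist
      exact hdist
    set B : ℝ := -lam * δ (k i) + lam ^ 2 * Mt * r ^ 2 / 2 with hBdef
    -- bound on the infimum of the model
    have hQle : (⨅ q : H, modelQ f' Ψ (Hop i) (x (k i)) q) ≤ ((B : ℝ) : EReal) := by
      refine le_trans (iInf_le _ (lam • (xs - x (k i)))) ?_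
      simp only [modelQ]
      rw [hψx (k i)]
      have hcomb : x (k i) + lam • (xs - x (k i)) = (1 - lam) • (x (k i)) + lam • xs := by
        rw [smul_sub, sub_smul, one_smul]
        abel
      have hconv2 := hΨ_conv (x (k i)) xs (1 - lam) lam (by linarith) hl0 (by ring)
      rw [hψx (k i), hψs, ← hcomb] at hconv2
      have hconv3 : Ψ (x (k i) + lam • (xs - x (k i))) ≤
          (((1 - lam) * (Fstar + δ (k i) - f (x (k i))) + lam * (Fstar - f xs) : ℝ) : EReal) := by
        refine le_trans hconv2 (le_of_eq ?_)
        norm_cast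
      calc ((inner ℝ (f' (x (k i))) (lam • (xs - x (k i))) : ℝ)
              + (1 / 2) * (inner ℝ (lam • (xs - x (k i))) (Hop i (lam • (xs - x (k i)))) : ℝ)
              : ℝ) + Ψ (x (k i) + lam • (xs - x (k i)))
              - ((Fstar + δ (k i) - f (x (k i)) : ℝ) : EReal)
          ≤ (((inner ℝ (f' (x (k i))) (lam • (xs - x (k i))) : ℝ)
              + (1 / 2) * (inner ℝ (lam • (xs - x (k i))) (Hop i (lam • (xs - x (k i)))) : ℝ)
              : ℝ)
              + (((1 - lam) * (Fstar + δ (k i) - f (x (k i))) + lam * (Fstar - f xs) : ℝ) : EReal))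
              - ((Fstar + δ (k i) - f (x (k i)) : ℝ) : EReal) :=
            EReal.sub_le_sub (add_le_add_right hconv3 _) (le_refl _)
        _ = ((((inner ℝ (f' (x (k i))) (lam • (xs - x (k i))) : ℝ)
              + (1 / 2) * (inner ℝ (lam • (xs - x (k i))) (Hop i (lam • (xs - x (k i)))) : ℝ))
              + ((1 - lam) * (Fstar + δ (k i) - f (x (k i))) + lam * (Fstar - f xs))
              - (Fstar + δ (k i) - f (x (k i))) : ℝ) : EReal) := by norm_cast
        _ ≤ ((B : ℝ) : EReal) := by
            apply EReal.coe_le_coe_iff.mpr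
            have hi1 : (inner ℝ (f' (x (k i))) (lam • (xs - x (k i))) : ℝ)
                = lam * (inner ℝ (f' (x (k i))) (xs - x (k i)) : ℝ) := real_inner_smul_right _ _ _
            have hi2 : (inner ℝ (lam • (xs - x (k i))) (Hop i (lam • (xs - x (k i)))) : ℝ)
                = lam * (lam * (inner ℝ (xs - x (k i)) (Hop i (xs - x (k i))) : ℝ)) := by
              rw [map_smul, real_inner_smul_left, real_inner_smul_right]
            have hgi : f (x (k i)) + (inner ℝ (f' (x (k i))) (xs - x (k i)) : ℝ) ≤ f xs :=
              grad_ineq hf_conv hf_diff (x (k i)) xs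
            have hub : (inner ℝ (xs - x (k i)) (Hop i (xs - x (k i))) : ℝ) ≤ Mt * r ^ 2 := by
              have h1 := hH_ub i (xs - x (k i))
              have h2 : ‖xs - x (k i)‖ ^ 2 ≤ r ^ 2 := by
                nlinarith [norm_nonneg (xs - x (k i))]
              nlinarith
            rw [hi1, hi2, hBdef]
            nlinarith [mul_le_mul_of_nonneg_left hgi hl0,
              mul_le_mul_of_nonneg_left hub (mul_nonneg hl0 hl0)]
    -- extract real value of the infimum
    have hQtop : (⨅ q : H, modelQ f' Ψ (Hop i) (x (k i)) q) ≠ ⊤ :=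
      ne_top_of_le_ne_top (EReal.coe_ne_top B) hQle
    set qs : ℝ := (⨅ q : H, modelQ f' Ψ (Hop i) (x (k i)) q).toReal with hqs
    have hQeq : (⨅ q : H, modelQ f' Ψ (Hop i) (x (k i)) q) = ((qs : ℝ) : EReal) :=
      (EReal.coe_toReal hQtop (hQbot i)).symm
    have hqsB : qs ≤ B := by
      rw [hQeq] at hQle
      exact_mod_cast hQle
    -- inexactness in real form
    have hinex : Qpr i - qs ≤ η * (-qs) := by
      have h := hinexact i
      rw [hQeq, hQp i] at h
      rw [← EReal.coe_neg, ← EReal.coe_mul, ← EReal.coe_sub] at h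
      exact_mod_cast h
    -- Armijo in real form
    have harm : δ (k i + 1) ≤ δ (k i) + γ * Qpr i := by
      have h := harmijo i
      rw [hδ (k i + 1), hδ (k i), hQp i] at h
      rw [← EReal.coe_mul, ← EReal.coe_add] at h
      have h3 : Fstar + δ (k i + 1) ≤ Fstar + δ (k i) + γ * Qpr i := by exact_mod_cast h
      linarith
    have hQprB : Qpr i ≤ (1 - η) * B := by
      have h1 : Qpr i ≤ (1 - η) * qs := by linarith
      nlinarith [hqsB]
    nlinarith [mul_le_mul_of_nonneg_left hQprB (le_of_lt hγ0)]
  have hkey : ∀ (i : ℕ) (lam : ℝ), 0 ≤ lam → lam ≤ 1 →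
      δ (k i + 1) ≤ δ (k i) + γ * (1 - η) * (-lam * δ (k i) + lam ^ 2 * Mt * R0 ^ 2 / 2) := by
    intro i lam hl0 hl1
    have hcont : ContinuousAt
        (fun r : ℝ => δ (k i) + γ * (1 - η) * (-lam * δ (k i) + lam ^ 2 * Mt * r ^ 2 / 2)) R0 := by
      fun_prop
    have htend := hcont.tendsto.mono_left (nhdsWithin_le_nhds (s := Set.Ioi R0))
    refine ge_of_tendsto htend ?_
    filter_upwards [self_mem_nhdsWithin] with r hr
    exact hkey' i lam r hl0 hl1 hr
  have hc0 : 0 < γ * (1 - η) := mul_pos hγ0 (by linarith)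
  have hc1 : γ * (1 - η) < 1 := by nlinarith
  have parta : ∀ t : ℕ, Mt * R0 ^ 2 ≤ δ (k t) →
      δ (k t + 1) ≤ (1 - γ * (1 - η) / 2) * δ (k t) := by
    intro t h
    have h1 := hkey t 1 zero_le_one le_rfl
    nlinarith [h1, hc0]
  have hchain : ∀ i : ℕ, δ (k (i + 1)) ≤ δ (k i + 1) := by
    intro i
    exact hδanti (Nat.succ_le_of_lt (hk (Nat.lt_succ_self i)))
  refine ⟨parta, ?_, ?_⟩
  · -- part (b)
    have hMRle : ∀ j : ℕ, δ (k (t₀ + j)) ≤ 2 * (Mt * R0 ^ 2) / (γ * (1 - η) * j + 2) := by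
      intro j
      induction j with
      | zero =>
          simp only [Nat.add_zero, Nat.cast_zero, mul_zero, zero_add]
          rw [le_div_iff₀ (by norm_num)]
          nlinarith [ht₀]
      | succ j ih =>
          set a : ℝ := δ (k (t₀ + j)) with ha
          have ha0 : 0 ≤ a := hδ0 _
          have haM : a < Mt * R0 ^ 2 :=
            lt_of_le_of_lt (hδanti (hk.monotone (Nat.le_add_right t₀ j))) ht₀
          set lam : ℝ := a / (Mt * R0 ^ 2) with hlam
          have hl0 : 0 ≤ lam := div_nonneg ha0 (le_of_lt hMR)
          have hl1 : lam ≤ 1 := le_of_lt ((div_lt_one hMR).mpr haM)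
          have h1 := hkey (t₀ + j) lam hl0 hl1
          have heq : -lam * a + lam ^ 2 * Mt * R0 ^ 2 / 2 = -(a ^ 2) / (2 * (Mt * R0 ^ 2)) := by
            rw [hlam]
            field_simp
            ring
          rw [heq] at h1
          have h2 : δ (k (t₀ + (j + 1))) ≤ a + γ * (1 - η) * (-(a ^ 2) / (2 * (Mt * R0 ^ 2))) := by
        
            have := hchain (t₀ + j)
            have he : t₀ + (j + 1) = (t₀ + j) + 1 := rfl
            rw [he]
            exact le_trans this h1
          -- now the algebra
          set c : ℝ := γ * (1 - η) with hcdef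
          set MR : ℝ := Mt * R0 ^ 2 with hMRdef
          have hT : (0 : ℝ) < c * j + 2 := by positivity
          have hT' : (0 : ℝ) < c * (j + 1 : ℕ) + 2 := by positivity
          have hihm : a * (c * j + 2) ≤ 2 * MR := by
            rw [le_div_iff₀ hT] at ih
            exact ih
          have h2' : δ (k (t₀ + (j + 1))) ≤ a - c * (a ^ 2 / (2 * MR)) := by
            rw [neg_div] at h2
            linarith
          have hT2 : 2 ≤ c * (j : ℝ) + 2 := by
            nlinarith [mul_nonneg (le_of_lt hc0) (Nat.cast_nonneg (α := ℝ) j)]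
          rw [le_div_iff₀ hT']
          have hTT : c * ((j : ℝ) + 1) + 2 = (c * (j : ℝ) + 2) + c := by ring
          push_cast
          rw [hTT]
          exact rate_rec hMR hc0 hc1 ha0 (le_of_lt haM) (hδ0 _) hT2 hihm h2'
    intro t ht
    obtain ⟨j, rfl⟩ := Nat.exists_eq_add_of_le ht
    have := hMRle j
    have hcast : ((t₀ + j : ℕ) : ℝ) - (t₀ : ℝ) = (j : ℝ) := by push_cast; ring
    rw [hcast]
    calc δ (k (t₀ + j)) ≤ 2 * (Mt * R0 ^ 2) / (γ * (1 - η) * j + 2) := this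
      _ = 2 * Mt * R0 ^ 2 / (γ * (1 - η) * j + 2) := by ring_nf
  · -- part (c): bound on t₀
    match t₀, ht₀, ht₀_first with
    | 0, _, _ => exact le_max_of_le_left (by norm_num)
    | (s+1), ht₀, ht₀_first =>
      set c : ℝ := γ * (1 - η) with hcdef
      set ρ : ℝ := 1 - c / 2 with hρdef
      have hρpos : 0 < ρ := by rw [hρdef]; linarith
      have hgeo : ∀ i : ℕ, i ≤ s → δ (k i) ≤ ρ ^ i * δ 0 := by
        intro i
        induction i with
        | zero => intro _; simpa using hδanti (Nat.zero_le (k 0))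
        | succ i ih =>
            intro hle
            have hge : Mt * R0 ^ 2 ≤ δ (k i) := not_lt.mp (ht₀_first i (by omega))
            calc δ (k (i + 1)) ≤ δ (k i + 1) := hchain i
              _ ≤ ρ * δ (k i) := parta i hge
              _ ≤ ρ * (ρ ^ i * δ 0) :=
                  mul_le_mul_of_nonneg_left (ih (by omega)) (le_of_lt hρpos)
              _ = ρ ^ (i + 1) * δ 0 := by ring
      have hs : Mt * R0 ^ 2 ≤ ρ ^ s * δ 0 :=
        le_trans (not_lt.mp (ht₀_first s (Nat.lt_succ_self s))) (hgeo s le_rfl)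
      have hδ0pos : 0 < δ 0 := by
        by_contra hcon
        push_neg at hcon
        nlinarith [pow_pos hρpos s, hMR]
      have hlog1 : Real.log (Mt * R0 ^ 2) ≤ s * Real.log ρ + Real.log (δ 0) := by
        calc Real.log (Mt * R0 ^ 2) ≤ Real.log (ρ ^ s * δ 0) := Real.log_le_log hMR hs
          _ = s * Real.log ρ + Real.log (δ 0) := by
              rw [Real.log_mul (by positivity) (ne_of_gt hδ0pos), Real.log_pow]
      have hlogρ : Real.log ρ ≤ -c / 2 := by
        have := Real.log_le_sub_one_of_pos hρpos
        rw [hρdef] at this ⊢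
        linarith
      have hslog : (s : ℝ) * (c / 2) ≤ Real.log (δ 0) - Real.log (Mt * R0 ^ 2) := by
        have h1 : (s : ℝ) * Real.log ρ ≤ (s : ℝ) * (-c / 2) :=
          mul_le_mul_of_nonneg_left hlogρ (Nat.cast_nonneg s)
        linarith
      have hfin : (s : ℝ) ≤ 2 / c * Real.log (δ 0 / (Mt * R0 ^ 2)) := by
        rw [Real.log_div (ne_of_gt hδ0pos) (ne_of_gt hMR), div_mul_eq_mul_div,
          le_div_iff₀ hc0]
        linarith
      refine le_max_of_le_right ?_
      push_cast
      linarith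
end

section
/- (Subgradient residual of F at the new point.) Let H be a real Hilbert space, f : H → ℝ differentiable with L-Lipschitz gradient, Ψ : H → ℝ ∪ {+∞} convex, proper and lower semicontinuous, and F = f + Ψ. Let A be a self-adjoint bounded linear operator with ‖A‖ ≤ M, and suppose x, p, r ∈ H satisfy r − ∇f(x) − A p ∈ ∂Ψ(x + p). Then the vector v := ∇f(x + p) + r − ∇f(x) − A p belongs to ∂F(x + p) = ∇f(x+p) + ∂Ψ(x+p), and ‖v‖ ≤ (L + M) ‖p‖ + ‖r‖; in particular dist(0, ∂F(x + p)) ≤ (L + M) ‖p‖ + ‖r‖. -/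
open Metric Filter

/-- if `r − ∇f(x) − A p ∈ ∂Ψ(x + p)`, then
`v = ∇f(x + p) + r − ∇f(x) − A p ∈ ∂F(x + p)` with `‖v‖ ≤ (L + M)‖p‖ + ‖r‖`; in
particular `dist(0, ∂F(x + p)) ≤ (L + M)‖p‖ + ‖r‖`. -/
theorem statement13
    {H : Type*} [NormedAddCommGroup H] [InnerProductSpace ℝ H] [CompleteSpace H]
    (f : H → ℝ) (f' : H → H) (Ψ : H → EReal) (A : H →L[ℝ] H)
    (L M : ℝ) (x p r : H)
    -- f differentiable with L-Lipschitz gradient f'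
    (hf_diff : ∀ y : H, HasGradientAt f (f' y) y)
    (hLip : ∀ a b : H, ‖f' a - f' b‖ ≤ L * ‖a - b‖)
    -- Ψ convex, proper, lower semicontinuous
    (hΨ_conv : ConvexEReal Ψ)
    (hΨ_proper : ProperEReal Ψ)
    (hΨ_lsc : LowerSemicontinuous Ψ)
    -- A self-adjoint with ‖A‖ ≤ M
    (hA_sa : ∀ u v : H, (inner ℝ (A u) v : ℝ) = (inner ℝ u (A v) : ℝ))
    (hA_norm : ‖A‖ ≤ M)
    -- residual subgradient condition
    (hr : r - f' x - A p ∈ subdiffPsi Ψ (x + p)) :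
    f' (x + p) + (r - f' x - A p) ∈ subdiffF f' Ψ (x + p) ∧
    ‖f' (x + p) + (r - f' x - A p)‖ ≤ (L + M) * ‖p‖ + ‖r‖ ∧
    infDist 0 (subdiffF f' Ψ (x + p)) ≤ (L + M) * ‖p‖ + ‖r‖ := by
  have hmem : f' (x + p) + (r - f' x - A p) ∈ subdiffF f' Ψ (x + p) :=
    ⟨r - f' x - A p, hr, rfl⟩
  have hnorm : ‖f' (x + p) + (r - f' x - A p)‖ ≤ (L + M) * ‖p‖ + ‖r‖ := by
    have h1 : f' (x + p) + (r - f' x - A p) = (f' (x + p) - f' x) + (-(A p)) + r := by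
      abel
    have h2 : ‖f' (x + p) - f' x‖ ≤ L * ‖p‖ := by
      have := hLip (x + p) x
      simpa using this
    have h3 : ‖A p‖ ≤ M * ‖p‖ :=
      le_trans (A.le_opNorm p) (by
        have := norm_nonneg p
        nlinarith)
    calc ‖f' (x + p) + (r - f' x - A p)‖
        = ‖(f' (x + p) - f' x) + (-(A p)) + r‖ := by rw [h1]
      _ ≤ ‖(f' (x + p) - f' x) + (-(A p))‖ + ‖r‖ := norm_add_le _ _
      _ ≤ ‖f' (x + p) - f' x‖ + ‖-(A p)‖ + ‖r‖ := by
          gcongr; exact norm_add_le _ _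
      _ ≤ L * ‖p‖ + M * ‖p‖ + ‖r‖ := by rw [norm_neg]; gcongr
      _ = (L + M) * ‖p‖ + ‖r‖ := by ring
  refine ⟨hmem, hnorm, ?_⟩
  calc infDist 0 (subdiffF f' Ψ (x + p)) ≤ dist 0 (f' (x + p) + (r - f' x - A p)) :=
        infDist_le_dist_of_mem hmem
    _ = ‖f' (x + p) + (r - f' x - A p)‖ := by rw [dist_zero_left]
    _ ≤ (L + M) * ‖p‖ + ‖r‖ := hnorm
end

section
/- (Subgradient residual for proximal-type subproblem solvers.) Let H be a real Hilbert space, f : H → ℝ differentiable with L-Lipschitz gradient, Ψ : H → ℝ ∪ {+∞} convex, proper and lower semicontinuous, and F = f + Ψ. Let A be a self-adjoint bounded operator with ‖A‖ ≤ M, and Λ a self-adjoint positive-definite bounded operator with ‖Λ‖ ≤ M₁. Suppose x, p, y, s ∈ H are such that x + p is the minimizer over z ∈ H of (1/2)⟨w − z, Λ(w − z)⟩ + Ψ(z), where w = y − Λ^{-1}(∇f(x) + A(y − x) + s) (i.e., x + p = prox^Λ_Ψ(y − Λ^{-1}(∇f(x) + A(y−x) + s))). Then the vector v := ∇f(x +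 p) − Λ(x + p − y) − ∇f(x) − A(y − x) − s belongs to ∂F(x + p) = ∇f(x+p) + ∂Ψ(x+p), and ‖v‖ ≤ (L + M₁) ‖p‖ + (M + M₁) ‖y − x‖ + ‖s‖. -/
open Metric Filter

/-- subgradient residual for proximal-type subproblem solvers: if
`x + p = prox^Λ_Ψ(w)` with `w = y − Λ⁻¹(∇f(x) + A(y − x) + s)` (equivalently
`Λ(y − w) = ∇f(x) + A(y − x) + s`), then
`v = ∇f(x + p) − Λ(x + p − y) − ∇f(x) − A(y − x) − s ∈ ∂F(x + p)` and
`‖v‖ ≤ (L + M₁)‖p‖ + (M + M₁)‖y − x‖ + ‖s‖`. -/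
theorem statement14
    {H : Type*} [NormedAddCommGroup H] [InnerProductSpace ℝ H] [CompleteSpace H]
    (f : H → ℝ) (f' : H → H) (Ψ : H → EReal) (A Λ : H →L[ℝ] H)
    (L M M₁ : ℝ) (x p y s w : H)
    -- f differentiable with L-Lipschitz gradient f'
    (hf_diff : ∀ z : H, HasGradientAt f (f' z) z)
    (hLip : ∀ a b : H, ‖f' a - f' b‖ ≤ L * ‖a - b‖)
    -- Ψ convex, proper, lower semicontinuous
    (hΨ_conv : ConvexEReal Ψ)
    (hΨ_proper : ProperEReal Ψ)
    (hΨ_lsc : LowerSemicontinuous Ψ)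
    -- A self-adjoint with ‖A‖ ≤ M
    (hA_sa : ∀ u v : H, (inner ℝ (A u) v : ℝ) = (inner ℝ u (A v) : ℝ))
    (hA_norm : ‖A‖ ≤ M)
    -- Λ self-adjoint positive definite with ‖Λ‖ ≤ M₁
    (hΛ_sa : ∀ u v : H, (inner ℝ (Λ u) v : ℝ) = (inner ℝ u (Λ v) : ℝ))
    (hΛ_pd : ∀ u : H, u ≠ 0 → (0 : ℝ) < (inner ℝ u (Λ u) : ℝ))
    (hΛ_norm : ‖Λ‖ ≤ M₁)
    -- w = y − Λ⁻¹(∇f(x) + A(y − x) + s)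
    (hw : Λ (y - w) = f' x + A (y - x) + s)
    -- x + p minimizes z ↦ (1/2)⟨w − z, Λ(w − z)⟩ + Ψ(z), i.e. x + p = prox^Λ_Ψ(w)
    (hprox : ∀ z : H,
      ((1 / 2 * (inner ℝ (w - (x + p)) (Λ (w - (x + p))) : ℝ) : ℝ) : EReal) + Ψ (x + p) ≤
      ((1 / 2 * (inner ℝ (w - z) (Λ (w - z)) : ℝ) : ℝ) : EReal) + Ψ z) :
    f' (x + p) - Λ (x + p - y) - f' x - A (y - x) - s ∈ subdiffF f' Ψ (x + p) ∧
    ‖f' (x + p) - Λ (x + p - y) - f' x - A (y - x) - s‖ ≤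
      (L + M₁) * ‖p‖ + (M + M₁) * ‖y - x‖ + ‖s‖ := by
  constructor
  · -- membership in the subdifferential
    refine ⟨Λ (w - (x + p)), ?_, ?_⟩
    · -- Λ (w - (x+p)) ∈ ∂Ψ(x+p)
      intro z
      obtain ⟨hbot, z₀, hz₀⟩ := hΨ_proper
      -- Ψ (x+p) is finite
      have hU : Ψ (x + p) ≠ ⊤ := by
        intro h
        have h1 := hprox z₀
        rw [h, EReal.add_top_of_ne_bot (EReal.coe_ne_bot _), top_le_iff] at h1
        have hz₀' : Ψ z₀ = ((Ψ z₀).toReal : EReal) := (EReal.coe_toReal hz₀ (hbot _)).symm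
        rw [hz₀', ← EReal.coe_add] at h1
        exact EReal.coe_ne_top _ h1
      by_cases hz : Ψ z = ⊤
      · rw [hz]; exact le_top
      set a : ℝ := (Ψ (x + p)).toReal with ha
      set b : ℝ := (Ψ z).toReal with hb
      have hA' : Ψ (x + p) = (a : EReal) := (EReal.coe_toReal hU (hbot _)).symm
      have hB' : Ψ z = (b : EReal) := (EReal.coe_toReal hz (hbot _)).symm
      set d : H := z - (x + p) with hd
      set e : H := w - (x + p) with he
      set c : ℝ := (inner ℝ d (Λ d) : ℝ) / 2 with hc
      have hc0 : 0 ≤ c := by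
        rcases eq_or_ne d 0 with h0 | h0
        · simp [hc, h0]
        · have := hΛ_pd d h0
          rw [hc]; linarith
      have key : ∀ t : ℝ, 0 < t → t ≤ 1 →
          a - b + (inner ℝ d (Λ e) : ℝ) ≤ t * c := by
        intro t ht ht1
        have hzt : (1 - t) • (x + p) + t • z = (x + p) + t • d := by
          rw [hd]; module
        have hconv := hΨ_conv (x + p) z (1 - t) t (by linarith) (le_of_lt ht) (by ring)
        rw [hzt, hA', hB'] at hconv
        have hconv' : Ψ ((x + p) + t • d) ≤ (((1 - t) * a + t * b : ℝ) : EReal) := by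
          refine hconv.trans_eq ?_
          rw [EReal.coe_add, EReal.coe_mul, EReal.coe_mul]
        have hpr := (hprox ((x + p) + t • d)).trans (add_le_add_right hconv' _)
        rw [hA'] at hpr
        have hwz : w - ((x + p) + t • d) = e - t • d := by rw [he]; abel
        rw [hwz, ← EReal.coe_add, ← EReal.coe_add, EReal.coe_le_coe_iff] at hpr
        -- expand the quadratic
        have hexp : (inner ℝ (e - t • d) (Λ (e - t • d)) : ℝ)
            = (inner ℝ e (Λ e) : ℝ) - 2 * t * (inner ℝ d (Λ e) : ℝ)
              + t ^ 2 * (inner ℝ d (Λ d) : ℝ) := by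
          have hsym : (inner ℝ e (Λ d) : ℝ) = (inner ℝ d (Λ e) : ℝ) := by
            rw [← hΛ_sa e d, real_inner_comm]
          simp only [map_sub, map_smul, inner_sub_left, inner_sub_right,
            inner_smul_left, inner_smul_right, RCLike.conj_to_real]
          rw [hsym]; ring
        rw [hexp] at hpr
        have := hpr
        nlinarith [this, ht]
      have hfinal : a - b + (inner ℝ d (Λ e) : ℝ) ≤ 0 := by
        refine le_of_forall_pos_le_add fun ε hε => ?_
        have ht0 : 0 < min 1 (ε / (c + 1)) := lt_min one_pos (by positivity)
        have h1 := key (min 1 (ε / (c + 1))) ht0 (min_le_left _ _)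
        have h2 : min 1 (ε / (c + 1)) * c ≤ ε := by
          calc min 1 (ε / (c + 1)) * c ≤ (ε / (c + 1)) * c :=
                mul_le_mul_of_nonneg_right (min_le_right _ _) hc0
            _ ≤ ε := by
                rw [div_mul_eq_mul_div, div_le_iff₀ (by linarith)]
                nlinarith
        linarith
      rw [hA', hB', ← EReal.coe_add, EReal.coe_le_coe_iff]
      have hsym2 : (inner ℝ (Λ e) d : ℝ) = (inner ℝ d (Λ e) : ℝ) := real_inner_comm _ _
      rw [hsym2]
      linarith
    · -- the algebraic identity for v
      have h1 : Λ (w - (x + p)) = Λ w - Λ (x + p) := map_sub _ _ _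
      have h2 : Λ y - Λ w = f' x + A (y - x) + s := by rw [← map_sub]; exact hw
      have h3 : Λ (x + p - y) = Λ (x + p) - Λ y := map_sub _ _ _
      rw [h1, h3]
      have : Λ w = Λ y - (f' x + A (y - x) + s) := by
        rw [← h2]; abel
      rw [this]; abel
  · -- norm bound
    have hM₁0 : 0 ≤ M₁ := le_trans (norm_nonneg Λ) hΛ_norm
    have h1 : ‖f' (x + p) - f' x‖ ≤ L * ‖p‖ := by
      have := hLip (x + p) x
      rwa [add_sub_cancel_left] at this
    have h2 : ‖Λ (x + p - y)‖ ≤ M₁ * (‖p‖ + ‖y - x‖) := by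
      calc ‖Λ (x + p - y)‖ ≤ ‖Λ‖ * ‖x + p - y‖ := Λ.le_opNorm _
        _ ≤ M₁ * ‖x + p - y‖ := mul_le_mul_of_nonneg_right hΛ_norm (norm_nonneg _)
        _ ≤ M₁ * (‖p‖ + ‖y - x‖) := by
            refine mul_le_mul_of_nonneg_left ?_ hM₁0
            have : x + p - y = p - (y - x) := by abel
            rw [this]
            exact norm_sub_le _ _
    have h3 : ‖A (y - x)‖ ≤ M * ‖y - x‖ :=
      le_trans (A.le_opNorm _) (mul_le_mul_of_nonneg_right hA_norm (norm_nonneg _))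
    have hv : f' (x + p) - Λ (x + p - y) - f' x - A (y - x) - s
        = (f' (x + p) - f' x) - Λ (x + p - y) - A (y - x) - s := by abel
    rw [hv]
    calc ‖(f' (x + p) - f' x) - Λ (x + p - y) - A (y - x) - s‖
        ≤ ‖(f' (x + p) - f' x) - Λ (x + p - y) - A (y - x)‖ + ‖s‖ := norm_sub_le _ _
      _ ≤ ‖(f' (x + p) - f' x) - Λ (x + p - y)‖ + ‖A (y - x)‖ + ‖s‖ := by
          linarith [norm_sub_le ((f' (x + p) - f' x) - Λ (x + p - y)) (A (y - x))]
      _ ≤ ‖f' (x + p) - f' x‖ + ‖Λ (x + p - y)‖ + ‖A (y - x)‖ + ‖s‖ := by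
          linarith [norm_sub_le (f' (x + p) - f' x) (Λ (x + p - y))]
      _ ≤ (L + M₁) * ‖p‖ + (M + M₁) * ‖y - x‖ + ‖s‖ := by linarith
end

section
/- (Step-size lower bound for backtracking line search.) Let H be a real Hilbert space, f : H → ℝ differentiable with L-Lipschitz gradient, Ψ : H → ℝ ∪ {+∞} convex, proper and lower semicontinuous, and F = f + Ψ. Let A be a self-adjoint operator with A ⪰ m·I for some m > 0, let γ ∈ (0,1), and let p satisfy Q_A(p; x) ≤ 0 and F(x) < ∞, Ψ(x + p) < ∞. Then the Armijo condition F(x + α p) ≤ F(x) + γ α Q_A(p; x) holds for every α ∈ (0, min{1, m/L}]. Consequently, the backtracking step size α = max{β^i : i ∈ ℕ ∪ {0}, β^i satisfies the Armijo condition} with β ∈ (0,1) satisfies α ≥ min{1, β m / L} > 0. -/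
open intervalIntegral in
lemma descent_lemma {H : Type*} [NormedAddCommGroup H] [InnerProductSpace ℝ H] [CompleteSpace H]
    (f : H → ℝ) (f' : H → H) (L : ℝ) (hL : 0 ≤ L)
    (hf : ∀ y : H, HasGradientAt f (f' y) y)
    (hLip : ∀ a b : H, ‖f' a - f' b‖ ≤ L * ‖a - b‖)
    (x d : H) : f (x + d) ≤ f x + (inner ℝ (f' x) d : ℝ) + L / 2 * ‖d‖ ^ 2 := by
  have hf'cont : Continuous f' := by
    have : LipschitzWith (Real.toNNReal L) f' := by
      apply LipschitzWith.of_dist_le_mul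
      intro a b
      simp only [dist_eq_norm]
      calc ‖f' a - f' b‖ ≤ L * ‖a - b‖ := hLip a b
        _ ≤ Real.toNNReal L * ‖a - b‖ := by
            gcongr; exact Real.le_coe_toNNReal L
    exact this.continuous
  have hg : ∀ t : ℝ, HasDerivAt (fun t : ℝ => f (x + t • d)) ((inner ℝ (f' (x + t • d)) d : ℝ)) t := by
    intro t
    have h1 : HasDerivAt (fun t : ℝ => x + t • d) d t := by
      simpa using ((hasDerivAt_id t).smul_const d).const_add x
    have h2 := (hf (x + t • d)).hasFDerivAt.comp_hasDerivAt t h1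
    exact h2
  have hcont : Continuous (fun t : ℝ => (inner ℝ (f' (x + t • d)) d : ℝ)) := by
    apply Continuous.inner
    · exact hf'cont.comp (by continuity)
    · exact continuous_const
  have hint : f (x + d) - f x = ∫ t in (0:ℝ)..1, (inner ℝ (f' (x + t • d)) d : ℝ) := by
    have := integral_eq_sub_of_hasDerivAt (f := fun t : ℝ => f (x + t • d))
      (fun t _ => hg t) (hcont.intervalIntegrable 0 1)
    simpa using this.symm
  have hmono : (∫ t in (0:ℝ)..1, (inner ℝ (f' (x + t • d)) d : ℝ)) ≤
      ∫ t in (0:ℝ)..1, ((inner ℝ (f' x) d : ℝ) + L * t * ‖d‖ ^ 2) := by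
    apply integral_mono_on (by norm_num) (hcont.intervalIntegrable 0 1)
      ((by continuity : Continuous fun t : ℝ => (inner ℝ (f' x) d : ℝ) + L * t * ‖d‖ ^ 2).intervalIntegrable 0 1)
    intro t ht
    rcases ht with ⟨ht0, ht1⟩
    have h1 : (inner ℝ (f' (x + t • d)) d : ℝ) - (inner ℝ (f' x) d : ℝ) =
        (inner ℝ (f' (x + t • d) - f' x) d : ℝ) := by rw [inner_sub_left]
    have h2 : (inner ℝ (f' (x + t • d) - f' x) d : ℝ) ≤ ‖f' (x + t • d) - f' x‖ * ‖d‖ :=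
      real_inner_le_norm _ _
    have h3 : ‖f' (x + t • d) - f' x‖ ≤ L * (t * ‖d‖) := by
      have := hLip (x + t • d) x
      simpa [norm_smul, abs_of_nonneg ht0, mul_assoc] using this
    nlinarith [norm_nonneg d, mul_le_mul_of_nonneg_right h3 (norm_nonneg d)]
  have hval : (∫ t in (0:ℝ)..1, ((inner ℝ (f' x) d : ℝ) + L * t * ‖d‖ ^ 2)) =
      (inner ℝ (f' x) d : ℝ) + L / 2 * ‖d‖ ^ 2 := by
    rw [integral_add (intervalIntegrable_const)
      ((by continuity : Continuous fun t : ℝ => L * t * ‖d‖ ^ 2).intervalIntegrable 0 1)]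
    simp [mul_assoc]
    ring
  rw [hval] at hmono
  linarith [hint ▸ hmono]



open Metric Filter

/-- step-size lower bound for backtracking line search: if `A ⪰ m I`,
`Q_A(p; x) ≤ 0`, `F(x) < ∞` and `Ψ(x + p) < ∞`, then the Armijo condition holds for
every `α ∈ (0, min{1, m/L}]`; consequently the backtracking step size
`α = max{βⁱ : βⁱ satisfies Armijo}` satisfies `α ≥ min{1, β m / L}`. -/
theorem statement17
    {H : Type*} [NormedAddCommGroup H] [InnerProductSpace ℝ H] [CompleteSpace H]
    (f : H → ℝ) (f' : H → H) (Ψ : H → EReal) (A : H →L[ℝ] H)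
    (L m γ : ℝ) (x p : H)
    -- f differentiable with L-Lipschitz gradient f', L > 0
    (hf_diff : ∀ y : H, HasGradientAt f (f' y) y)
    (hL : 0 < L)
    (hLip : ∀ a b : H, ‖f' a - f' b‖ ≤ L * ‖a - b‖)
    -- Ψ convex, proper, lower semicontinuous
    (hΨ_conv : ConvexEReal Ψ)
    (hΨ_proper : ProperEReal Ψ)
    (hΨ_lsc : LowerSemicontinuous Ψ)
    -- A self-adjoint with A ⪰ m I, m > 0
    (hm : 0 < m)
    (hA_sa : ∀ u v : H, (inner ℝ (A u) v : ℝ) = (inner ℝ u (A v) : ℝ))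
    (hA_lb : ∀ u : H, m * ‖u‖ ^ 2 ≤ (inner ℝ u (A u) : ℝ))
    -- γ ∈ (0,1)
    (hγ0 : 0 < γ) (hγ1 : γ < 1)
    -- p with Q_A(p; x) ≤ 0, and finiteness F(x) < ∞, Ψ(x + p) < ∞
    (hQp : modelQ f' Ψ A x p ≤ (0 : EReal))
    (hFx : objF f Ψ x ≠ ⊤)
    (hΨxp : Ψ (x + p) ≠ ⊤) :
    -- the Armijo condition holds for every α ∈ (0, min{1, m/L}]
    (∀ α : ℝ, 0 < α → α ≤ min 1 (m / L) →
      objF f Ψ (x + α • p) ≤ objF f Ψ x + ((γ * α : ℝ) : EReal) * modelQ f' Ψ A x p) ∧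
    -- hence the backtracking step size is at least min{1, β m / L} > 0
    (∀ β : ℝ, 0 < β → β < 1 → ∀ j : ℕ,
      (objF f Ψ (x + β ^ j • p) ≤
        objF f Ψ x + ((γ * β ^ j : ℝ) : EReal) * modelQ f' Ψ A x p) →
      (∀ i : ℕ,
        (objF f Ψ (x + β ^ i • p) ≤
          objF f Ψ x + ((γ * β ^ i : ℝ) : EReal) * modelQ f' Ψ A x p) → β ^ i ≤ β ^ j) →
      min 1 (β * m / L) ≤ β ^ j) := by
  classical
  obtain ⟨hbot, -⟩ := hΨ_proper
  have hxt : Ψ x ≠ ⊤ := by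
    intro h
    exact hFx (by simp [objF, h, EReal.add_top_of_ne_bot (EReal.coe_ne_bot (f x))])
  obtain ⟨a, ha⟩ : ∃ a : ℝ, Ψ x = (a : EReal) :=
    ⟨(Ψ x).toReal, (EReal.coe_toReal hxt (hbot x)).symm⟩
  obtain ⟨b, hb⟩ : ∃ b : ℝ, Ψ (x + p) = (b : EReal) :=
    ⟨(Ψ (x + p)).toReal, (EReal.coe_toReal hΨxp (hbot _)).symm⟩
  set ip : ℝ := (inner ℝ (f' x) p : ℝ) with hip
  set pap : ℝ := (inner ℝ p (A p) : ℝ) with hpap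
  set q : ℝ := ip + (1 / 2) * pap + b - a with hqdef
  have hmodel : modelQ f' Ψ A x p = (q : EReal) := by
    rw [modelQ, ha, hb, hqdef, ← hip, ← hpap]
    norm_cast
  have hq : q ≤ 0 := by
    rw [hmodel] at hQp
    exact_mod_cast hQp
  have key : ∀ α : ℝ, 0 < α → α ≤ min 1 (m / L) →
      objF f Ψ (x + α • p) ≤ objF f Ψ x + ((γ * α : ℝ) : EReal) * modelQ f' Ψ A x p := by
    intro α hα0 hα
    have hα1 : α ≤ 1 := le_trans hα (min_le_left _ _)
    have hαmL : α ≤ m / L := le_trans hα (min_le_right _ _)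
    have h2 : α * L ≤ m := (le_div_iff₀ hL).mp hαmL
    have hdesc := descent_lemma f f' L hL.le hf_diff hLip x (α • p)
    have hn : ‖α • p‖ ^ 2 = α ^ 2 * ‖p‖ ^ 2 := by
      rw [norm_smul, mul_pow]
      simp [abs_of_nonneg hα0.le]
    have hinner : (inner ℝ (f' x) (α • p) : ℝ) = α * ip := real_inner_smul_right _ _ _
    rw [hn, hinner] at hdesc
    have hconv := hΨ_conv x (x + p) (1 - α) α (by linarith) hα0.le (by ring)
    have hpt : (1 - α) • x + α • (x + p) = x + α • p := by module
    rw [hpt, ha, hb] at hconv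
    have hconv' : Ψ (x + α • p) ≤ (((1 - α) * a + α * b : ℝ) : EReal) := by
      push_cast
      exact hconv
    have hApb := hA_lb p
    have hfact2 : L * α * ‖p‖ ^ 2 ≤ pap := by
      nlinarith [sq_nonneg ‖p‖]
    have hfact1 : (1 - γ) * α * q ≤ 0 := by
      apply mul_nonpos_of_nonneg_of_nonpos _ hq
      nlinarith
    have hfact3 : (α / 2) * (L * α * ‖p‖ ^ 2 - pap) ≤ 0 :=
      mul_nonpos_of_nonneg_of_nonpos (by linarith) (by linarith)
    have hreal : f (x + α • p) + ((1 - α) * a + α * b) ≤ (f x + a) + (γ * α) * q := by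
      rw [hqdef] at hfact1 ⊢
      nlinarith [hdesc, hfact1, hfact3]
    calc objF f Ψ (x + α • p) = (f (x + α • p) : EReal) + Ψ (x + α • p) := rfl
      _ ≤ (f (x + α • p) : EReal) + (((1 - α) * a + α * b : ℝ) : EReal) :=
          add_le_add_right hconv' _
      _ = ((f (x + α • p) + ((1 - α) * a + α * b) : ℝ) : EReal) := by norm_cast
      _ ≤ (((f x + a) + (γ * α) * q : ℝ) : EReal) := by exact_mod_cast hreal
      _ = objF f Ψ x + ((γ * α : ℝ) : EReal) * modelQ f' Ψ A x p := by
          rw [objF, ha, hmodel]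
          norm_cast
  refine ⟨key, ?_⟩
  intro β hβ0 hβ1 j hj hmax
  rcases le_or_gt 1 (m / L) with h1 | h1
  · have harm0 := key 1 one_pos (le_min le_rfl h1)
    have h10 : (1 : ℝ) = β ^ 0 := (pow_zero β).symm
    rw [h10] at harm0
    have := hmax 0 harm0
    rw [pow_zero] at this
    exact le_trans (min_le_left _ _) this
  · have hex : ∃ i, β ^ i ≤ m / L := by
      obtain ⟨n, hn⟩ := exists_pow_lt_of_lt_one (div_pos hm hL) hβ1
      exact ⟨n, hn.le⟩
    set i := Nat.find hex with hidef
    have hi : β ^ i ≤ m / L := Nat.find_spec hex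
    have hipos : i ≠ 0 := by
      intro h
      rw [h, pow_zero] at hi
      linarith
    have hprev : ¬ β ^ (i - 1) ≤ m / L :=
      Nat.find_min hex (Nat.sub_lt (Nat.pos_of_ne_zero hipos) one_pos)
    have hβi0 : 0 < β ^ i := pow_pos hβ0 i
    have hβi1 : β ^ i ≤ 1 := pow_le_one₀ hβ0.le hβ1.le
    have harm := key (β ^ i) hβi0 (le_min hβi1 hi)
    have hle := hmax i harm
    have hieq : i - 1 + 1 = i := Nat.succ_pred_eq_of_pos (Nat.pos_of_ne_zero hipos)
    have hsplit : β ^ i = β * β ^ (i - 1) := by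
      calc β ^ i = β ^ (i - 1 + 1) := by rw [hieq]
        _ = β ^ (i - 1) * β := pow_succ β (i - 1)
        _ = β * β ^ (i - 1) := mul_comm _ _
    have hgt : β * (m / L) < β ^ i := by
      rw [hsplit]
      exact mul_lt_mul_of_pos_left (lt_of_not_ge hprev) hβ0
    rw [mul_div_assoc]
    have hmin : min 1 (β * (m / L)) ≤ β * (m / L) := min_le_right _ _
    linarith
end
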